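/- arXiv:1704.04398 — 6 statements merged into one kernel-verified Lean document; each statement's English description precedes it below -/
import Mathlib

section
/- Let x∼y be an edge of G. Then the idleness function p ↦ κ_p(x,y) is concave on the interval [0,1]; that is, for all p,q ∈ [0,1] and t ∈ [0,1], κ_{t·p+(1−t)·q}(x,y) ≥ t·κ_p(x,y) + (1−t)·κ_q(x,y). -/
open scoped Classical

noncomputable def mu {V : Type*} (G : SimpleGraph V) [G.LocallyFinite] (x : V) (p : ℝ) :
    V → ℝ :=
  fun z => if z = x then p else if G.Adj x z then (1 - p) / (G.degree x) else 0

def IsPlan {V : Type*} (π : V × V → ℝ) (μ1 μ2 : V → ℝ) : Prop :=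
  (∀ q, π q ∈ Set.Icc (0 : ℝ) 1) ∧ (Function.support π).Finite ∧
    (∀ u, ∑ᶠ v, π (u, v) = μ1 u) ∧ (∀ v, ∑ᶠ u, π (u, v) = μ2 v)

noncomputable def cost {V : Type*} (G : SimpleGraph V) (π : V × V → ℝ) : ℝ :=
  ∑ᶠ q : V × V, (G.dist q.1 q.2 : ℝ) * π q

noncomputable def W1 {V : Type*} (G : SimpleGraph V) (μ1 μ2 : V → ℝ) : ℝ :=
  sInf (cost G '' {π | IsPlan π μ1 μ2})

noncomputable def kappa {V : Type*} (G : SimpleGraph V) [G.LocallyFinite]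
    (p : ℝ) (x y : V) : ℝ :=
  1 - W1 G (mu G x p) (mu G y p)

def IsLip {V : Type*} (G : SimpleGraph V) (φ : V → ℝ) : Prop :=
  ∀ u v, |φ u - φ v| ≤ (G.dist u v : ℝ)

noncomputable def Fpot {V : Type*} (G : SimpleGraph V) [G.LocallyFinite]
    (x y : V) (φ : V → ℝ) : ℝ :=
  (G.degree y : ℝ) * ∑ z ∈ (G.neighborFinset x).erase y, φ z
    - (G.degree x : ℝ) * ∑ z ∈ (G.neighborFinset y).erase x, φ z

noncomputable def cIdle {V : Type*} (G : SimpleGraph V) [G.LocallyFinite]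
    (x y : V) (j : ℤ) : ℝ :=
  sSup (Fpot G x y ''
    {φ | IsLip G φ ∧ (∀ w, ∃ n : ℤ, φ w = (n : ℝ)) ∧ φ x = (j : ℝ) ∧ φ y = 0})

noncomputable def fIdle {V : Type*} (G : SimpleGraph V) [G.LocallyFinite]
    (x y : V) (j : ℤ) (p : ℝ) : ℝ :=
  (p - (1 - p) / (G.degree y : ℝ)) * (j : ℝ)
    + ((1 - p) / ((G.degree x : ℝ) * (G.degree y : ℝ))) * cIdle G x y j

def IsFinProb {V : Type*} (μ : V → ℝ) : Prop :=
  (∀ v, 0 ≤ μ v) ∧ (Function.support μ).Finite ∧ ∑ᶠ v, μ v = 1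


open Function in
private lemma myMu_mem_Icc {V : Type*} (G : SimpleGraph V) [G.LocallyFinite]
    {x : V} {p : ℝ} (hp : p ∈ Set.Icc (0:ℝ) 1) (hd : 0 < G.degree x) (z : V) :
    mu G x p z ∈ Set.Icc (0:ℝ) 1 := by
  obtain ⟨hp0, hp1⟩ := hp
  unfold mu
  split_ifs with h1 h2
  · exact ⟨hp0, hp1⟩
  · constructor
    · exact div_nonneg (by linarith) (by positivity)
    · rw [div_le_one (by exact_mod_cast hd)]
      have : (1:ℝ) ≤ G.degree x := by exact_mod_cast hd
      linarith
  · norm_num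

open Function in
private lemma myMu_support_subset {V : Type*} (G : SimpleGraph V) [G.LocallyFinite]
    (x : V) (p : ℝ) :
    Function.support (mu G x p) ⊆ ↑(insert x (G.neighborFinset x)) := by
  intro z hz
  simp only [Function.mem_support, mu] at hz
  simp only [Finset.coe_insert, Set.mem_insert_iff, Finset.mem_coe,
    SimpleGraph.mem_neighborFinset]
  by_cases h1 : z = x
  · exact Or.inl h1
  · rw [if_neg h1] at hz
    by_cases h2 : G.Adj x z
    · exact Or.inr h2
    · rw [if_neg h2] at hz; exact absurd rfl hz

private lemma myMu_support_finite {V : Type*} (G : SimpleGraph V) [G.LocallyFinite]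
    (x : V) (p : ℝ) : (Function.support (mu G x p)).Finite :=
  Set.Finite.subset (Finset.finite_toSet _) (myMu_support_subset G x p)

private lemma myMu_finsum {V : Type*} (G : SimpleGraph V) [G.LocallyFinite]
    {x : V} (p : ℝ) (hd : 0 < G.degree x) : ∑ᶠ z, mu G x p z = 1 := by
  rw [finsum_eq_sum_of_support_subset _ (myMu_support_subset G x p)]
  rw [Finset.sum_insert (by simp [SimpleGraph.mem_neighborFinset])]
  have hx : mu G x p x = p := by simp [mu]
  have hn : ∀ z ∈ G.neighborFinset x, mu G x p z = (1 - p) / (G.degree x) := by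
    intro z hz
    rw [SimpleGraph.mem_neighborFinset] at hz
    have : z ≠ x := fun h => by subst h; exact G.irrefl hz
    simp [mu, this, hz]
  rw [hx, Finset.sum_congr rfl hn, Finset.sum_const, ← SimpleGraph.card_neighborFinset_eq_degree,
    nsmul_eq_mul]
  have hd' : (G.degree x : ℝ) ≠ 0 := by exact_mod_cast hd.ne'
  rw [SimpleGraph.card_neighborFinset_eq_degree]
  field_simp
  ring

private lemma myMu_affine {V : Type*} (G : SimpleGraph V) [G.LocallyFinite]
    (x : V) (p q t : ℝ) (z : V) :
    mu G x (t * p + (1 - t) * q) z = t * mu G x p z + (1 - t) * mu G x q z := by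
  unfold mu
  split_ifs with h1 h2
  · ring
  · field_simp; ring
  · ring

open Function in
private lemma mySupport_slice_finite {V : Type*} {π : V × V → ℝ}
    (hf : (support π).Finite) (u : V) : (support fun v => π (u, v)).Finite := by
  apply Set.Finite.of_finite_image (f := fun v => ((u, v) : V × V))
  · apply hf.subset
    rintro q ⟨v, hv, rfl⟩
    exact hv
  · intro a _ b _ h
    simpa using congrArg Prod.snd h

open Function in
private lemma mySupport_slice_finite' {V : Type*} {π : V × V → ℝ}
    (hf : (support π).Finite) (v : V) : (support fun u => π (u, v)).Finite := by
  apply Set.Finite.of_finite_image (f := fun u => ((u, v) : V × V))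
  · apply hf.subset
    rintro q ⟨u, hu, rfl⟩
    exact hu
  · intro a _ b _ h
    simpa using congrArg Prod.fst h

open Function in
private lemma myFinsum_comb {α : Type*} (f g : α → ℝ) (t : ℝ)
    (hf : (support f).Finite) (hg : (support g).Finite) :
    ∑ᶠ a, (t * f a + (1 - t) * g a) = t * ∑ᶠ a, f a + (1 - t) * ∑ᶠ a, g a := by
  rw [mul_finsum (f := f), mul_finsum (f := g)]
  exact finsum_add_distrib (hf.subset (support_mul_subset_right _ _))
    (hg.subset (support_mul_subset_right _ _))

open Function in
private lemma myProd_plan {V : Type*} (μ1 μ2 : V → ℝ)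
    (h1 : ∀ v, μ1 v ∈ Set.Icc (0:ℝ) 1) (h2 : ∀ v, μ2 v ∈ Set.Icc (0:ℝ) 1)
    (hf1 : (support μ1).Finite) (hf2 : (support μ2).Finite)
    (hs1 : ∑ᶠ v, μ1 v = 1) (hs2 : ∑ᶠ v, μ2 v = 1) :
    IsPlan (fun q : V × V => μ1 q.1 * μ2 q.2) μ1 μ2 := by
  refine ⟨?_, ?_, ?_, ?_⟩
  · intro q
    exact ⟨mul_nonneg (h1 q.1).1 (h2 q.2).1,
      mul_le_one₀ (h1 q.1).2 (h2 q.2).1 (h2 q.2).2⟩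
  · apply Set.Finite.subset (hf1.prod hf2)
    intro q hq
    simp only [Function.mem_support] at hq
    exact ⟨fun h => hq (by simp [h]), fun h => hq (by simp [h])⟩
  · intro u
    show ∑ᶠ v, μ1 u * μ2 v = μ1 u
    rw [← mul_finsum (f := μ2), hs2, mul_one]
  · intro v
    show ∑ᶠ u, μ1 u * μ2 v = μ2 v
    rw [← finsum_mul (f := μ1), hs1, one_mul]

open Function in
private lemma myComb_plan {V : Type*} {π1 π2 : V × V → ℝ} {μ1 μ2 ν1 ν2 : V → ℝ} {t : ℝ}
    (ht : t ∈ Set.Icc (0:ℝ) 1) (h1 : IsPlan π1 μ1 ν1) (h2 : IsPlan π2 μ2 ν2) :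
    IsPlan (fun q => t * π1 q + (1 - t) * π2 q)
      (fun v => t * μ1 v + (1 - t) * μ2 v) (fun v => t * ν1 v + (1 - t) * ν2 v) := by
  obtain ⟨ht0, ht1⟩ := ht
  obtain ⟨hb1, hs1, hr1, hc1⟩ := h1
  obtain ⟨hb2, hs2, hr2, hc2⟩ := h2
  refine ⟨?_, ?_, ?_, ?_⟩
  · intro q
    show t * π1 q + (1 - t) * π2 q ∈ Set.Icc (0:ℝ) 1
    obtain ⟨ha, hb⟩ := hb1 q
    obtain ⟨hc, hd⟩ := hb2 q
    constructor
    · have := mul_nonneg ht0 ha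
      have := mul_nonneg (by linarith : (0:ℝ) ≤ 1 - t) hc
      linarith
    · have h5 : t * π1 q ≤ t * 1 := by
        exact mul_le_mul_of_nonneg_left hb ht0
      have h6 : (1 - t) * π2 q ≤ (1 - t) * 1 := by
        exact mul_le_mul_of_nonneg_left hd (by linarith)
      linarith
  · apply Set.Finite.subset (hs1.union hs2)
    intro q hq
    simp only [Function.mem_support] at hq
    by_contra h
    simp only [Set.mem_union, Function.mem_support, not_or, not_not] at h
    rw [h.1, h.2] at hq
    simp at hq
  · intro u
    show ∑ᶠ v, (t * π1 (u, v) + (1 - t) * π2 (u, v)) = _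
    rw [myFinsum_comb _ _ t (mySupport_slice_finite hs1 u) (mySupport_slice_finite hs2 u),
      hr1 u, hr2 u]
  · intro v
    show ∑ᶠ u, (t * π1 (u, v) + (1 - t) * π2 (u, v)) = _
    rw [myFinsum_comb _ _ t (mySupport_slice_finite' hs1 v) (mySupport_slice_finite' hs2 v),
      hc1 v, hc2 v]

open Function in
private lemma myCost_comb {V : Type*} (G : SimpleGraph V) {π1 π2 : V × V → ℝ} (t : ℝ)
    (hs1 : (support π1).Finite) (hs2 : (support π2).Finite) :
    cost G (fun q => t * π1 q + (1 - t) * π2 q) = t * cost G π1 + (1 - t) * cost G π2 := by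
  unfold cost
  have : ∀ q : V × V, (G.dist q.1 q.2 : ℝ) * (t * π1 q + (1 - t) * π2 q)
      = t * ((G.dist q.1 q.2 : ℝ) * π1 q) + (1 - t) * ((G.dist q.1 q.2 : ℝ) * π2 q) := by
    intro q; ring
  rw [finsum_congr this]
  exact myFinsum_comb _ _ t (hs1.subset (support_mul_subset_right _ _))
    (hs2.subset (support_mul_subset_right _ _))

private lemma myCost_nonneg {V : Type*} (G : SimpleGraph V) {π : V × V → ℝ} {μ1 μ2 : V → ℝ}
    (h : IsPlan π μ1 μ2) : 0 ≤ cost G π :=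
  finsum_nonneg fun q => mul_nonneg (Nat.cast_nonneg _) (h.1 q).1

theorem stmt0 {V : Type*} (G : SimpleGraph V) [G.LocallyFinite] (hG : G.Connected)
    (x y : V) (hxy : G.Adj x y) :
    ∀ p ∈ Set.Icc (0 : ℝ) 1, ∀ q ∈ Set.Icc (0 : ℝ) 1, ∀ t ∈ Set.Icc (0 : ℝ) 1,
      t * kappa G p x y + (1 - t) * kappa G q x y ≤ kappa G (t * p + (1 - t) * q) x y := by
  intro p hp q hq t ht
  have hdx : 0 < G.degree x := by
    rw [← SimpleGraph.card_neighborFinset_eq_degree]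
    exact Finset.card_pos.2 ⟨y, (SimpleGraph.mem_neighborFinset G x y).2 hxy⟩
  have hdy : 0 < G.degree y := by
    rw [← SimpleGraph.card_neighborFinset_eq_degree]
    exact Finset.card_pos.2 ⟨x, (SimpleGraph.mem_neighborFinset G y x).2 hxy.symm⟩
  obtain ⟨ht0, ht1⟩ := ht
  set r : ℝ := t * p + (1 - t) * q with hr
  have hrI : r ∈ Set.Icc (0:ℝ) 1 := by
    obtain ⟨hp0, hp1⟩ := hp; obtain ⟨hq0, hq1⟩ := hq
    constructor
    · have := mul_nonneg ht0 hp0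
      have := mul_nonneg (by linarith : (0:ℝ) ≤ 1 - t) hq0
      simp only [hr]; linarith
    · have h1 : t * p ≤ t * 1 := mul_le_mul_of_nonneg_left hp1 ht0
      have h2 : (1 - t) * q ≤ (1 - t) * 1 := mul_le_mul_of_nonneg_left hq1 (by linarith)
      simp only [hr]; linarith
  -- nonemptiness and boundedness of plan sets
  have plan_exists : ∀ s ∈ Set.Icc (0:ℝ) 1,
      (cost G '' {π | IsPlan π (mu G x s) (mu G y s)}).Nonempty := by
    intro s hs
    exact ⟨cost G (fun q : V × V => mu G x s q.1 * mu G y s q.2),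
      Set.mem_image_of_mem _ (myProd_plan _ _ (myMu_mem_Icc G hs hdx) (myMu_mem_Icc G hs hdy)
        (myMu_support_finite G x s) (myMu_support_finite G y s)
        (myMu_finsum G s hdx) (myMu_finsum G s hdy))⟩
  have bdd : ∀ s : ℝ, BddBelow (cost G '' {π | IsPlan π (mu G x s) (mu G y s)}) := by
    intro s
    refine ⟨0, ?_⟩
    rintro c ⟨π, hπ, rfl⟩
    exact myCost_nonneg G hπ
  -- key: W1 at r is at most the convex combination
  have key : W1 G (mu G x r) (mu G y r)
      ≤ t * W1 G (mu G x p) (mu G y p) + (1 - t) * W1 G (mu G x q) (mu G y q) := by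
    by_contra hcon
    push_neg at hcon
    set A := W1 G (mu G x p) (mu G y p)
    set B := W1 G (mu G x q) (mu G y q)
    set C := W1 G (mu G x r) (mu G y r)
    set ε : ℝ := (C - (t * A + (1 - t) * B)) / 2 with hε
    have hεpos : 0 < ε := by simp only [hε]; linarith
    obtain ⟨a, ha, haε⟩ := Real.lt_sInf_add_pos (plan_exists p hp) hεpos
    obtain ⟨b, hb, hbε⟩ := Real.lt_sInf_add_pos (plan_exists q hq) hεpos
    obtain ⟨π1, hπ1, rfl⟩ := ha
    obtain ⟨π2, hπ2, rfl⟩ := hb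
    have hcomb : IsPlan (fun q => t * π1 q + (1 - t) * π2 q) (mu G x r) (mu G y r) := by
      have := myComb_plan ⟨ht0, ht1⟩ hπ1 hπ2
      have hx : (fun v => t * mu G x p v + (1 - t) * mu G x q v) = mu G x r := by
        funext z; rw [myMu_affine G x p q t z]
      have hy : (fun v => t * mu G y p v + (1 - t) * mu G y q v) = mu G y r := by
        funext z; rw [myMu_affine G y p q t z]
      rwa [hx, hy] at this
    have hCle : C ≤ t * cost G π1 + (1 - t) * cost G π2 := by
      have hmem : t * cost G π1 + (1 - t) * cost G π2
          ∈ cost G '' {π | IsPlan π (mu G x r) (mu G y r)} := by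
        refine ⟨_, hcomb, ?_⟩
        exact myCost_comb G t hπ1.2.1 hπ2.2.1
      exact csInf_le (bdd r) hmem
    have h1 : t * cost G π1 ≤ t * (A + ε) := mul_le_mul_of_nonneg_left haε.le ht0
    have h2 : (1 - t) * cost G π2 ≤ (1 - t) * (B + ε) :=
      mul_le_mul_of_nonneg_left hbε.le (by linarith)
    have : C ≤ t * A + (1 - t) * B + ε := by nlinarith
    simp only [hε] at this
    linarith
  -- conclude
  unfold kappa
  linarith
end

section
/- Let x∼y be an edge of G and let p ∈ [0,1]. Then there exists a 1-Lipschitz function φ : V → ℝ taking only integer values (φ(w) ∈ ℤ for all w ∈ V) such that Σ_w φ(w)·(μ_x^p(w) − μ_y^p(w)) = W_1(μ_x^p, μ_y^p). -/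
open scoped Classical

private lemma support_listsum_finite {α β : Type*} (l : List α) (F : α → β → ℝ)
    (h : ∀ a, (Function.support (F a)).Finite) :
    (Function.support fun v => (l.map fun a => F a v).sum).Finite := by
  induction l with
  | nil => simpa using Set.finite_empty
  | cons a t ih =>
    apply Set.Finite.subset ((h a).union ih)
    intro v hv
    simp only [Function.mem_support, List.map_cons, List.sum_cons] at hv
    by_contra hc
    simp only [Set.mem_union, Function.mem_support, not_or, not_not] at hc
    exact hv (by rw [hc.1, hc.2, add_zero])

private lemma finsum_listsum {α β : Type*} (l : List α) (F : α → β → ℝ)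
    (h : ∀ a, (Function.support (F a)).Finite) :
    (∑ᶠ v, (l.map fun a => F a v).sum) = (l.map fun a => ∑ᶠ v, F a v).sum := by
  induction l with
  | nil => simp
  | cons a t ih =>
    simp only [List.map_cons, List.sum_cons]
    rw [finsum_add_distrib (h a) (support_listsum_finite t F h), ih]

private lemma list_sum_map_sub {α : Type*} (l : List α) (f g : α → ℝ) :
    (l.map fun a => f a - g a).sum = (l.map f).sum - (l.map g).sum := by
  induction l with
  | nil => simp
  | cons a t ih => simp only [List.map_cons, List.sum_cons, ih]; ring

private lemma list_sum_mul_left {α : Type*} (l : List α) (b : ℝ) (f : α → ℝ) :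
    (l.map fun i => b * f i).sum = b * (l.map f).sum := by
  induction l with
  | nil => simp
  | cons a t ih => simp only [List.map_cons, List.sum_cons, ih]; ring

private lemma list_sum_fst_snd {α : Type*} {l : List (α × α)}
    (h : ((l.map Prod.fst : List α) : Multiset α) = (l.map Prod.snd : List α)) (f : α → ℝ) :
    (l.map fun pr => f pr.1).sum = (l.map fun pr => f pr.2).sum := by
  have := congrArg (fun M => (Multiset.map f M).sum) h
  simpa [List.map_map, Function.comp_def] using this

private lemma finsum_if_eq {β : Type*} (q0 : β) (D : β → ℝ) :
    ∑ᶠ q, (if q = q0 then D q else 0) = D q0 := by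
  rw [finsum_eq_single _ q0 (fun q hq => by simp [hq])]
  simp

private lemma support_slice_fst {V : Type*} {P : V × V → ℝ} (hfin : (Function.support P).Finite)
    (u : V) : (Function.support fun v => P (u, v)).Finite := by
  have : (Function.support fun v => P (u, v)) ⊆ (fun v => (u, v)) ⁻¹' Function.support P :=
    fun v hv => hv
  exact (hfin.preimage (Set.injOn_of_injective (fun a b hab => by
    simpa using congrArg Prod.snd hab))).subset this

private lemma support_slice_snd {V : Type*} {P : V × V → ℝ} (hfin : (Function.support P).Finite)
    (v : V) : (Function.support fun u => P (u, v)).Finite := by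
  have : (Function.support fun u => P (u, v)) ⊆ (fun u => (u, v)) ⁻¹' Function.support P :=
    fun u hu => hu
  exact (hfin.preimage (Set.injOn_of_injective (fun a b hab => by
    simpa using congrArg Prod.fst hab))).subset this

private lemma exchange {V : Type*} (G : SimpleGraph V) {μ1 μ2 : V → ℝ} (P : V × V → ℝ)
    (hP : IsPlan P μ1 μ2) (hμ1le : ∀ w, μ1 w ≤ 1)
    (hopt : ∀ π, IsPlan π μ1 μ2 → cost G P ≤ cost G π)
    (arcs : List (V × V)) (c : V × V → V)
    (hmul : ((arcs.map Prod.fst : List V) : Multiset V) = (arcs.map Prod.snd : List V))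
    (hc : ∀ pr ∈ arcs, 0 < P (pr.2, c pr)) :
    0 ≤ (arcs.map fun pr => ((G.dist pr.1 (c pr) : ℝ) - (G.dist pr.2 (c pr) : ℝ))).sum := by
  obtain ⟨hIcc, hfin, hrow, hcol⟩ := hP
  by_cases harcs : arcs = []
  · simp [harcs]
  have hlen : 0 < (arcs.length : ℝ) := by
    have := List.length_pos_iff.2 harcs
    exact_mod_cast this
  -- the minimum positive mass among decreased entries
  set s : Finset ℝ := (arcs.map fun pr => P (pr.2, c pr)).toFinset with hs
  have hsne : s.Nonempty := by
    obtain ⟨pr, hpr⟩ := List.exists_mem_of_ne_nil arcs harcs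
    exact ⟨P (pr.2, c pr), List.mem_toFinset.2 (List.mem_map.2 ⟨pr, hpr, rfl⟩)⟩
  set m := s.min' hsne with hm
  have hmpos : 0 < m := by
    obtain ⟨r, hr⟩ := List.mem_map.1 (List.mem_toFinset.1 (s.min'_mem hsne))
    rw [hm] at *
    exact hr.2 ▸ hc r hr.1
  have hmle : ∀ pr ∈ arcs, m ≤ P (pr.2, c pr) := fun pr h =>
    Finset.min'_le _ _ (List.mem_toFinset.2 (List.mem_map.2 ⟨pr, h, rfl⟩))
  set ε := m / arcs.length with hε
  have hεpos : 0 < ε := div_pos hmpos hlen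
  set g : (V × V) → (V × V) → ℝ := fun pr q =>
    (if q = (pr.1, c pr) then 1 else 0) - (if q = (pr.2, c pr) then 1 else 0) with hg
  set Δ : (V × V) → ℝ := fun q => (arcs.map fun pr => g pr q).sum with hΔ
  set π' : (V × V) → ℝ := fun q => P q + ε * Δ q with hπ'
  have hgfin : ∀ pr, (Function.support (g pr)).Finite := by
    intro pr
    apply Set.Finite.subset ((Set.finite_singleton (pr.1, c pr)).insert (pr.2, c pr))
    intro q hq
    by_contra hq'
    simp only [Set.mem_insert_iff, Set.mem_singleton_iff, not_or] at hq'
    exact hq (by simp [hg, hq'.1, hq'.2])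
  have hΔfin : (Function.support Δ).Finite := support_listsum_finite arcs g hgfin
  -- nonnegativity of π'
  have hπ'nn : ∀ q, 0 ≤ π' q := by
    intro q
    by_cases hq : ∃ pr ∈ arcs, q = (pr.2, c pr)
    · obtain ⟨pr0, hpr0, rfl⟩ := hq
      have h1 : m ≤ P (pr0.2, c pr0) := hmle _ hpr0
      have h2 : -(arcs.length : ℝ) ≤ Δ (pr0.2, c pr0) := by
        have hterm : ∀ pr ∈ arcs, (-1 : ℝ) ≤ g pr (pr0.2, c pr0) := by
          intro pr _
          simp only [hg]
          split <;> split <;> norm_num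
        calc -(arcs.length : ℝ) = (arcs.map fun _ => (-1 : ℝ)).sum := by
              simp [List.sum_replicate, List.map_const']
          _ ≤ _ := List.sum_le_sum hterm
      have h3 : ε * -(arcs.length : ℝ) ≤ ε * Δ (pr0.2, c pr0) :=
        mul_le_mul_of_nonneg_left h2 hεpos.le
      have h4 : ε * (arcs.length : ℝ) = m := div_mul_cancel₀ m hlen.ne'
      simp only [hπ']
      nlinarith
    · push_neg at hq
      have hΔnn : 0 ≤ Δ q := by
        apply List.sum_nonneg
        intro r hr
        obtain ⟨pr, hpr, rfl⟩ := List.mem_map.1 hr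
        have := hq pr hpr
        simp only [hg, if_neg this]
        split <;> norm_num
      have := (hIcc q).1
      simp only [hπ']
      positivity
  -- row sums of g
  have hgufin : ∀ pr u, (Function.support fun v => g pr (u, v)).Finite := by
    intro pr u
    apply Set.Finite.subset (Set.finite_singleton (c pr))
    intro v hv
    by_contra hv'
    simp only [Set.mem_singleton_iff] at hv'
    apply hv
    simp [hg, Prod.ext_iff, hv']
  have hrowg : ∀ pr u, ∑ᶠ v, g pr (u, v) =
      (if u = pr.1 then (1:ℝ) else 0) - (if u = pr.2 then (1:ℝ) else 0) := by
    intro pr u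
    have h1 : (fun v => g pr (u, v)) = fun v =>
        (if v = c pr then (if u = pr.1 then (1:ℝ) else 0) - (if u = pr.2 then (1:ℝ) else 0) else 0) := by
      funext v
      by_cases h1 : u = pr.1 <;> by_cases h2 : u = pr.2 <;> by_cases h3 : v = c pr <;>
        simp [hg, Prod.ext_iff, h1, h2, h3]
    rw [h1, finsum_if_eq (c pr) (fun _ : V => (if u = pr.1 then (1:ℝ) else 0) - (if u = pr.2 then (1:ℝ) else 0))]
  have hrowΔ : ∀ u, ∑ᶠ v, Δ (u, v) = 0 := by
    intro u
    have : (fun v => Δ (u, v)) = fun v => (arcs.map fun pr => g pr (u, v)).sum := rfl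
    rw [this, finsum_listsum arcs _ (hgufin · u)]
    have h2 : (arcs.map fun pr => ∑ᶠ v, g pr (u, v)) =
        arcs.map fun pr => (if u = pr.1 then (1:ℝ) else 0) - (if u = pr.2 then (1:ℝ) else 0) :=
      List.map_congr_left (fun pr _ => hrowg pr u)
    rw [h2, list_sum_map_sub, list_sum_fst_snd hmul (fun a => if u = a then (1:ℝ) else 0), sub_self]
  have hgvfin : ∀ pr v, (Function.support fun u => g pr (u, v)).Finite := by
    intro pr v
    apply Set.Finite.subset ((Set.finite_singleton pr.1).insert pr.2)
    intro u hu
    by_contra hu'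
    simp only [Set.mem_insert_iff, Set.mem_singleton_iff, not_or] at hu'
    exact hu (by simp [hg, Prod.ext_iff, hu'.1, hu'.2])
  have hcolg : ∀ pr v, ∑ᶠ u, g pr (u, v) = 0 := by
    intro pr v
    have h1 : (fun u => g pr (u, v)) = fun u =>
        (if u = pr.1 then (if v = c pr then (1:ℝ) else 0) else 0) -
        (if u = pr.2 then (if v = c pr then (1:ℝ) else 0) else 0) := by
      funext u
      by_cases h1 : u = pr.1 <;> by_cases h2 : u = pr.2 <;> by_cases h3 : v = c pr <;>
        simp [hg, Prod.ext_iff, h1, h2, h3]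
    have hf1 : (Function.support fun u : V => if u = pr.1 then (if v = c pr then (1:ℝ) else 0) else 0).Finite := by
      apply Set.Finite.subset (Set.finite_singleton pr.1)
      intro u hu
      by_contra hu'
      exact hu (by simp_all)
    have hf2 : (Function.support fun u : V => if u = pr.2 then (if v = c pr then (1:ℝ) else 0) else 0).Finite := by
      apply Set.Finite.subset (Set.finite_singleton pr.2)
      intro u hu
      by_contra hu'
      exact hu (by simp_all)
    rw [h1, finsum_sub_distrib hf1 hf2,
      finsum_if_eq pr.1 (fun _ : V => (if v = c pr then (1:ℝ) else 0)),
      finsum_if_eq pr.2 (fun _ : V => (if v = c pr then (1:ℝ) else 0)), sub_self]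
  have hΔufin : ∀ u, (Function.support fun v => Δ (u, v)).Finite := fun u =>
    support_listsum_finite arcs (fun pr v => g pr (u, v)) (fun pr => hgufin pr u)
  have hΔvfin : ∀ v, (Function.support fun u => Δ (u, v)).Finite := fun v =>
    support_listsum_finite arcs (fun pr u => g pr (u, v)) (fun pr => hgvfin pr v)
  have hcolΔ : ∀ v, ∑ᶠ u, Δ (u, v) = 0 := by
    intro v
    have h0 : (fun u => Δ (u, v)) = fun u => (arcs.map fun pr => g pr (u, v)).sum := rfl
    rw [h0, finsum_listsum arcs _ (fun pr => hgvfin pr v)]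
    have h2 : (arcs.map fun pr => ∑ᶠ u, g pr (u, v)) = arcs.map fun _ => (0:ℝ) :=
      List.map_congr_left (fun pr _ => hcolg pr v)
    rw [h2]
    simp
  have hεΔufin : ∀ u, (Function.support fun v => ε * Δ (u, v)).Finite := fun u =>
    (hΔufin u).subset (fun v hv => by
      simp only [Function.mem_support] at *
      exact fun h => hv (by rw [h, mul_zero]))
  have hεΔvfin : ∀ v, (Function.support fun u => ε * Δ (u, v)).Finite := fun v =>
    (hΔvfin v).subset (fun u hu => by
      simp only [Function.mem_support] at *
      exact fun h => hu (by rw [h, mul_zero]))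
  have hrowπ' : ∀ u, ∑ᶠ v, π' (u, v) = μ1 u := by
    intro u
    have h0 : (fun v => π' (u, v)) = fun v => P (u, v) + ε * Δ (u, v) := rfl
    rw [h0, finsum_add_distrib (support_slice_fst hfin u) (hεΔufin u),
      ← mul_finsum (fun v => Δ (u, v)) ε, hrowΔ u, mul_zero, add_zero]
    exact hrow u
  have hcolπ' : ∀ v, ∑ᶠ u, π' (u, v) = μ2 v := by
    intro v
    have h0 : (fun u => π' (u, v)) = fun u => P (u, v) + ε * Δ (u, v) := rfl
    rw [h0, finsum_add_distrib (support_slice_snd hfin v) (hεΔvfin v),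
      ← mul_finsum (fun u => Δ (u, v)) ε, hcolΔ v, mul_zero, add_zero]
    exact hcol v
  have hsupπ' : (Function.support π').Finite := by
    apply Set.Finite.subset (hfin.union hΔfin)
    intro q hq
    by_contra hq'
    simp only [Set.mem_union, Function.mem_support, not_or, not_not] at hq'
    exact hq (by simp only [hπ', hq'.1, hq'.2, mul_zero, add_zero])
  have hπ'le : ∀ q, π' q ≤ 1 := by
    intro q
    have hfq : (Function.support fun v => π' (q.1, v)).Finite := by
      apply Set.Finite.subset ((support_slice_fst hfin q.1).union (hεΔufin q.1))
      intro v hv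
      by_contra hv'
      simp only [Set.mem_union, Function.mem_support, not_or, not_not] at hv'
      exact hv (by show P (q.1, v) + ε * Δ (q.1, v) = 0; rw [hv'.1, zero_add]; exact hv'.2)
    have h1 := single_le_finsum q.2 hfq (fun v => hπ'nn (q.1, v))
    rw [hrowπ' q.1] at h1
    calc π' q = π' (q.1, q.2) := by rw [Prod.mk.eta]
      _ ≤ μ1 q.1 := h1
      _ ≤ 1 := hμ1le q.1
  have hπ'plan : IsPlan π' μ1 μ2 := ⟨fun q => ⟨hπ'nn q, hπ'le q⟩, hsupπ', hrowπ', hcolπ'⟩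
  -- cost computations
  have hDPfin : (Function.support fun q : V × V => (G.dist q.1 q.2 : ℝ) * P q).Finite := by
    apply hfin.subset
    intro q hq
    simp only [Function.mem_support] at *
    exact fun h => hq (by rw [h, mul_zero])
  have hDΔfin : (Function.support fun q : V × V => ε * ((G.dist q.1 q.2 : ℝ) * Δ q)).Finite := by
    apply hΔfin.subset
    intro q hq
    simp only [Function.mem_support] at *
    exact fun h => hq (by rw [h, mul_zero, mul_zero])
  have hDΔfin' : (Function.support fun q : V × V => (G.dist q.1 q.2 : ℝ) * Δ q).Finite := by
    apply hΔfin.subset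
    intro q hq
    simp only [Function.mem_support] at *
    exact fun h => hq (by rw [h, mul_zero])
  have hDg : ∀ pr, ∑ᶠ q : V × V, (G.dist q.1 q.2 : ℝ) * g pr q =
      (G.dist pr.1 (c pr) : ℝ) - (G.dist pr.2 (c pr) : ℝ) := by
    intro pr
    have h1 : (fun q : V × V => (G.dist q.1 q.2 : ℝ) * g pr q) = fun q =>
        (if q = (pr.1, c pr) then (G.dist q.1 q.2 : ℝ) else 0) -
        (if q = (pr.2, c pr) then (G.dist q.1 q.2 : ℝ) else 0) := by
      funext q
      show (G.dist q.1 q.2 : ℝ) * ((if q = (pr.1, c pr) then (1:ℝ) else 0) -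
        (if q = (pr.2, c pr) then (1:ℝ) else 0)) = _
      rw [mul_sub]
      congr 1
      · by_cases h : q = (pr.1, c pr) <;> simp [h]
      · by_cases h : q = (pr.2, c pr) <;> simp [h]
    have hf1 : (Function.support fun q : V × V => if q = (pr.1, c pr) then (G.dist q.1 q.2 : ℝ) else 0).Finite := by
      apply Set.Finite.subset (Set.finite_singleton (pr.1, c pr))
      intro q hq
      by_contra hq'
      exact hq (by simp_all)
    have hf2 : (Function.support fun q : V × V => if q = (pr.2, c pr) then (G.dist q.1 q.2 : ℝ) else 0).Finite := by
      apply Set.Finite.subset (Set.finite_singleton (pr.2, c pr))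
      intro q hq
      by_contra hq'
      exact hq (by simp_all)
    have e1 : ∑ᶠ q : V × V, (if q = (pr.1, c pr) then (G.dist q.1 q.2 : ℝ) else 0) =
        (G.dist pr.1 (c pr) : ℝ) := by
      rw [finsum_eq_single _ (pr.1, c pr) (fun q hq => if_neg hq)]
      simp
    have e2 : ∑ᶠ q : V × V, (if q = (pr.2, c pr) then (G.dist q.1 q.2 : ℝ) else 0) =
        (G.dist pr.2 (c pr) : ℝ) := by
      rw [finsum_eq_single _ (pr.2, c pr) (fun q hq => if_neg hq)]
      simp
    rw [h1, finsum_sub_distrib hf1 hf2, e1, e2]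
  have hcostΔ : ∑ᶠ q : V × V, (G.dist q.1 q.2 : ℝ) * Δ q =
      (arcs.map fun pr => ((G.dist pr.1 (c pr) : ℝ) - (G.dist pr.2 (c pr) : ℝ))).sum := by
    have h1 : (fun q : V × V => (G.dist q.1 q.2 : ℝ) * Δ q) =
        fun q => (arcs.map fun pr => (G.dist q.1 q.2 : ℝ) * g pr q).sum := by
      funext q
      exact (list_sum_mul_left arcs _ _).symm
    have hfing : ∀ pr, (Function.support fun q : V × V => (G.dist q.1 q.2 : ℝ) * g pr q).Finite := by
      intro pr
      apply (hgfin pr).subset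
      intro q hq
      simp only [Function.mem_support] at *
      exact fun h => hq (by rw [h, mul_zero])
    rw [h1, finsum_listsum arcs _ hfing]
    exact congrArg List.sum (List.map_congr_left fun pr _ => hDg pr)
  have hcost' : cost G π' = cost G P + ε *
      (arcs.map fun pr => ((G.dist pr.1 (c pr) : ℝ) - (G.dist pr.2 (c pr) : ℝ))).sum := by
    have h1 : (fun q : V × V => (G.dist q.1 q.2 : ℝ) * π' q) = fun q =>
        (G.dist q.1 q.2 : ℝ) * P q + ε * ((G.dist q.1 q.2 : ℝ) * Δ q) := by
      funext q
      show (G.dist q.1 q.2 : ℝ) * (P q + ε * Δ q) = _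
      ring
    show (∑ᶠ q : V × V, (G.dist q.1 q.2 : ℝ) * π' q) = _
    rw [h1, finsum_add_distrib hDPfin hDΔfin,
      ← mul_finsum (fun q : V × V => (G.dist q.1 q.2 : ℝ) * Δ q) ε, hcostΔ]
    rfl
  have hfinal := hopt π' hπ'plan
  rw [hcost'] at hfinal
  nlinarith

private lemma list_sum_intcast {α : Type*} (l : List α) (f : α → ℤ) :
    (((l.map f).sum : ℤ) : ℝ) = (l.map fun a => ((f a : ℤ) : ℝ)).sum := by
  induction l with
  | nil => simp
  | cons a t ih => simp only [List.map_cons, List.sum_cons]; push_cast [ih]; ring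

private def arcsFrom {α : Type*} : α → List α → List (α × α)
  | _, [] => []
  | a, c :: t => (a, c) :: arcsFrom c t

private lemma arcsFrom_append {α : Type*} (l : List α) (a u : α) :
    arcsFrom a (l ++ [u]) = arcsFrom a l ++ [(l.getLastD a, u)] := by
  induction l generalizing a with
  | nil => simp [arcsFrom]
  | cons c t ih =>
    show (a, c) :: arcsFrom c (t ++ [u]) = ((a, c) :: arcsFrom c t) ++ [((c :: t).getLastD a, u)]
    rw [ih, List.getLastD_cons]
    simp

private lemma arcsFrom_mem {α : Type*} {l : List α} {a : α} {pr : α × α}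
    (h : pr ∈ arcsFrom a l) : pr.2 ∈ l := by
  induction l generalizing a with
  | nil => simp [arcsFrom] at h
  | cons c t ih =>
    simp only [arcsFrom, List.mem_cons] at h
    rcases h with h | h
    · simp [h]
    · exact List.mem_cons_of_mem _ (ih h)

private lemma arcsFrom_multiset {α : Type*} (l : List α) (a : α) :
    (((arcsFrom a l).map Prod.fst : List α) : Multiset α) + {l.getLastD a} =
      (((arcsFrom a l).map Prod.snd : List α) : Multiset α) + {a} := by
  induction l generalizing a with
  | nil => simp [arcsFrom]
  | cons c t ih =>
    have := ih c
    show (((a :: (arcsFrom c t).map Prod.fst : List α) : Multiset α)) + {(c :: t).getLastD a} =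
      (((c :: (arcsFrom c t).map Prod.snd : List α) : Multiset α)) + {a}
    rw [List.getLastD_cons, ← Multiset.cons_coe, ← Multiset.cons_coe,
      ← Multiset.singleton_add, ← Multiset.singleton_add, add_assoc, this]
    abel
private lemma potential_exists {α : Type*} (U : Set α) (b : α) (hb : b ∈ U) (W : α → α → ℤ)
    (hCW : ∀ l : List α, (∀ a ∈ l, a ∈ U) → l.getLastD b = b →
      0 ≤ ((arcsFrom b l).map fun pr => W pr.1 pr.2).sum)
    (harc_app : ∀ (l : List α) (a u : α),
      arcsFrom a (l ++ [u]) = arcsFrom a l ++ [(l.getLastD a, u)]) :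
    ∃ φ : α → ℤ, ∀ u ∈ U, ∀ u' ∈ U, φ u' ≤ φ u + W u u' := by
  set Ω : α → Set ℤ := fun u => {z | ∃ l : List α, (∀ a' ∈ l, a' ∈ U) ∧ l.getLastD b = u ∧
    ((arcsFrom b l).map fun pr => W pr.1 pr.2).sum = z} with hΩ
  have hne : ∀ u ∈ U, (Ω u).Nonempty := by
    intro u hu
    exact ⟨W b u, [u], by simpa using hu, by simp, by simp [arcsFrom]⟩
  have hext : ∀ (u' : α) (z : ℤ), z ∈ Ω u' → ∀ u'' ∈ U, z + W u' u'' ∈ Ω u'' := by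
    rintro u' z ⟨l, hl, hlast, hsum⟩ u'' hu''
    refine ⟨l ++ [u''], ?_, ?_, ?_⟩
    · intro a' ha'
      rcases List.mem_append.1 ha' with h | h
      · exact hl a' h
      · simpa using (by simpa using h) ▸ hu''
    · simp
    · rw [harc_app, List.map_append, List.sum_append, hlast, hsum]; simp
  have hbdd : ∀ u ∈ U, BddBelow (Ω u) := by
    intro u hu
    refine ⟨-(W u b), ?_⟩
    rintro z hz
    obtain ⟨l, hl, hlast, hsum⟩ := hz
    have hmem := hext u z ⟨l, hl, hlast, hsum⟩ b hb
    obtain ⟨l', hl', hlast', hsum'⟩ := hmem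
    have := hCW l' hl' hlast'
    rw [hsum'] at this
    linarith
  refine ⟨fun u => sInf (Ω u), ?_⟩
  intro u hu u' hu'
  have key : ∀ z ∈ Ω u, sInf (Ω u') ≤ z + W u u' := fun z hz =>
    csInf_le (hbdd u' hu') (hext u z hz u' hu')
  have h2 : sInf (Ω u') - W u u' ≤ sInf (Ω u) :=
    le_csInf (hne u hu) (fun z hz => by linarith [key z hz])
  linarith

theorem stmt8 {V : Type*} (G : SimpleGraph V) [G.LocallyFinite] (hG : G.Connected)
    (x y : V) (hxy : G.Adj x y) (p : ℝ) (hp : p ∈ Set.Icc (0 : ℝ) 1) :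
    ∃ φ : V → ℝ, IsLip G φ ∧ (∀ w, ∃ n : ℤ, φ w = (n : ℝ)) ∧
      ∑ᶠ w, φ w * (mu G x p w - mu G y p w) = W1 G (mu G x p) (mu G y p) := by
  classical
  obtain ⟨hp0, hp1⟩ := hp
  set μ1 := mu G x p with hμ1def
  set μ2 := mu G y p with hμ2def
  -- degrees
  have hdx : 0 < G.degree x := by
    rw [← SimpleGraph.card_neighborFinset_eq_degree]
    exact Finset.card_pos.2 ⟨y, by simpa using hxy⟩
  have hdy : 0 < G.degree y := by
    rw [← SimpleGraph.card_neighborFinset_eq_degree]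
    exact Finset.card_pos.2 ⟨x, by simpa using hxy.symm⟩
  set B1 : Finset V := insert x (G.neighborFinset x) with hB1def
  set B2 : Finset V := insert y (G.neighborFinset y) with hB2def
  -- basic facts about mu
  have hmu_fact : ∀ (z : V) (q : ℝ) (hq0 : 0 ≤ q) (hq1 : q ≤ 1) (hdz : 0 < G.degree z),
      (∀ w, 0 ≤ mu G z q w) ∧ (∀ w, mu G z q w ≤ 1) ∧
      (∀ w, w ∉ insert z (G.neighborFinset z) → mu G z q w = 0) ∧
      (∑ w ∈ insert z (G.neighborFinset z), mu G z q w = 1) := by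
    intro z q hq0 hq1 hdz
    have hdzR : (0:ℝ) < (G.degree z : ℝ) := by exact_mod_cast hdz
    have hdz1 : (1:ℝ) ≤ (G.degree z : ℝ) := by exact_mod_cast hdz
    refine ⟨?_, ?_, ?_, ?_⟩
    · intro w
      unfold mu
      split_ifs with h1 h2
      · exact hq0
      · exact div_nonneg (by linarith) hdzR.le
      · exact le_refl 0
    · intro w
      unfold mu
      split_ifs with h1 h2
      · exact hq1
      · rw [div_le_one hdzR]; linarith
      · norm_num
    · intro w hw
      simp only [Finset.mem_insert, SimpleGraph.mem_neighborFinset, not_or] at hw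
      unfold mu
      rw [if_neg hw.1, if_neg hw.2]
    · have hznn : z ∉ G.neighborFinset z := by
        simp [SimpleGraph.irrefl]
      rw [Finset.sum_insert hznn]
      have h1 : ∀ w ∈ G.neighborFinset z, mu G z q w = (1 - q) / (G.degree z : ℝ) := by
        intro w hw
        rw [SimpleGraph.mem_neighborFinset] at hw
        unfold mu
        rw [if_neg (fun h => by rw [h] at hw; exact G.irrefl hw), if_pos hw]
      rw [Finset.sum_congr rfl h1, Finset.sum_const, SimpleGraph.card_neighborFinset_eq_degree,
        nsmul_eq_mul]
      have : mu G z q z = q := by unfold mu; rw [if_pos rfl]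
      rw [this]
      field_simp
      ring
  obtain ⟨hμ1nn, hμ1le, hμ1zero, hμ1sumB⟩ := hmu_fact x p hp0 hp1 hdx
  obtain ⟨hμ2nn, hμ2le, hμ2zero, hμ2sumB⟩ := hmu_fact y p hp0 hp1 hdy
  rw [← hμ1def] at hμ1nn hμ1le hμ1zero hμ1sumB
  rw [← hμ2def] at hμ2nn hμ2le hμ2zero hμ2sumB
  rw [← hB1def] at hμ1zero hμ1sumB
  rw [← hB2def] at hμ2zero hμ2sumB
  set K : Finset (V × V) := B1 ×ˢ B2 with hKdef
  -- support of any plan is inside K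
  have hplan_supp : ∀ π : V × V → ℝ, IsPlan π μ1 μ2 → ∀ q : V × V, q ∉ K → π q = 0 := by
    intro π hπ q hq
    obtain ⟨hIcc, hfin, hrow, hcol⟩ := hπ
    rw [hKdef, Finset.mem_product, not_and_or] at hq
    rcases hq with hq | hq
    · have h1 : π (q.1, q.2) ≤ ∑ᶠ v, π (q.1, v) :=
        single_le_finsum q.2 (support_slice_fst hfin q.1) (fun v => (hIcc (q.1, v)).1)
      rw [hrow q.1, hμ1zero q.1 hq] at h1
      have h2 := (hIcc q).1
      rw [Prod.mk.eta] at h1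
      linarith
    · have h1 : π (q.1, q.2) ≤ ∑ᶠ u, π (u, q.2) :=
        single_le_finsum q.1 (support_slice_snd hfin q.2) (fun u => (hIcc (u, q.2)).1)
      rw [hcol q.2, hμ2zero q.2 hq] at h1
      have h2 := (hIcc q).1
      rw [Prod.mk.eta] at h1
      linarith
  -- the compact set C
  set C : Set (V × V → ℝ) :=
    (Set.univ.pi fun q : V × V => if q ∈ K then Set.Icc (0:ℝ) 1 else {0}) ∩
      ((⋂ u ∈ B1, {π : V × V → ℝ | ∑ v ∈ B2, π (u, v) = μ1 u}) ∩
        (⋂ v ∈ B2, {π : V × V → ℝ | ∑ u ∈ B1, π (u, v) = μ2 v})) with hCdef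
  have hCeq : {π : V × V → ℝ | IsPlan π μ1 μ2} = C := by
    ext π
    simp only [Set.mem_setOf_eq, hCdef, Set.mem_inter_iff, Set.mem_pi, Set.mem_univ,
      forall_true_left, Set.mem_iInter, Set.mem_setOf_eq]
    constructor
    · intro hπ
      refine ⟨?_, ?_, ?_⟩
      · intro q
        by_cases hq : q ∈ K
        · rw [if_pos hq]; exact hπ.1 q
        · rw [if_neg hq]; exact hplan_supp π hπ q hq
      · intro u hu
        rw [← hπ.2.2.1 u]
        exact (finsum_eq_sum_of_support_subset _ (fun v hv => by
          by_contra hvB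
          exact hv (hplan_supp π hπ (u, v) (by
            rw [hKdef, Finset.mem_product]; exact fun h => hvB h.2)))).symm
      · intro v hv
        rw [← hπ.2.2.2 v]
        exact (finsum_eq_sum_of_support_subset _ (fun u hu => by
          by_contra huB
          exact hu (hplan_supp π hπ (u, v) (by
            rw [hKdef, Finset.mem_product]; exact fun h => huB h.1)))).symm
    · rintro ⟨hpi, hrows, hcols⟩
      have hoff : ∀ q : V × V, q ∉ K → π q = 0 := by
        intro q hq
        have := hpi q
        rw [if_neg hq] at this
        exact this
      have hsupp : Function.support π ⊆ ↑K := by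
        intro q hq
        by_contra hqK
        exact hq (hoff q (by simpa using hqK))
      have hIcc : ∀ q, π q ∈ Set.Icc (0:ℝ) 1 := by
        intro q
        by_cases hq : q ∈ K
        · have := hpi q; rwa [if_pos hq] at this
        · rw [hoff q hq]; exact ⟨le_refl 0, by norm_num⟩
      refine ⟨hIcc, Set.Finite.subset K.finite_toSet hsupp, ?_, ?_⟩
      · intro u
        by_cases hu : u ∈ B1
        · rw [← hrows u hu]
          exact finsum_eq_sum_of_support_subset _ (fun v hv => by
            by_contra hvB
            exact hv (hoff (u, v) (by
              rw [hKdef, Finset.mem_product]; exact fun h => hvB h.2)))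
        · have h0 : ∀ v, π (u, v) = 0 := fun v => hoff (u, v) (by
            rw [hKdef, Finset.mem_product]; exact fun h => hu h.1)
          have : (fun v => π (u, v)) = fun _ => (0:ℝ) := funext h0
          rw [this, finsum_zero, hμ1zero u hu]
      · intro v
        by_cases hv : v ∈ B2
        · rw [← hcols v hv]
          exact finsum_eq_sum_of_support_subset _ (fun u hu => by
            by_contra huB
            exact hu (hoff (u, v) (by
              rw [hKdef, Finset.mem_product]; exact fun h => huB h.1)))
        · have h0 : ∀ u, π (u, v) = 0 := fun u => hoff (u, v) (by
            rw [hKdef, Finset.mem_product]; exact fun h => hv h.2)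
          have : (fun u => π (u, v)) = fun _ => (0:ℝ) := funext h0
          rw [this, finsum_zero, hμ2zero v hv]
  -- compactness
  have hCcompact : IsCompact C := by
    apply IsCompact.inter_right
    · exact isCompact_univ_pi (fun q => by
        split_ifs
        · exact isCompact_Icc
        · exact isCompact_singleton)
    · apply IsClosed.inter
      · exact isClosed_biInter (fun u _ => isClosed_eq
          (continuous_finset_sum _ fun v _ => continuous_apply (u, v)) continuous_const)
      · exact isClosed_biInter (fun v _ => isClosed_eq
          (continuous_finset_sum _ fun u _ => continuous_apply (u, v)) continuous_const)
  -- the product plan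
  have hfinμ1 : (Function.support μ1).Finite := Set.Finite.subset B1.finite_toSet
    (fun w hw => by by_contra h; exact hw (hμ1zero w (by simpa using h)))
  have hfinμ2 : (Function.support μ2).Finite := Set.Finite.subset B2.finite_toSet
    (fun w hw => by by_contra h; exact hw (hμ2zero w (by simpa using h)))
  have hμ1tot : ∑ᶠ w, μ1 w = 1 := by
    rw [finsum_eq_sum_of_support_subset μ1 (fun w hw => by
      by_contra h; exact hw (hμ1zero w (by simpa using h)))]
    exact hμ1sumB
  have hμ2tot : ∑ᶠ w, μ2 w = 1 := by
    rw [finsum_eq_sum_of_support_subset μ2 (fun w hw => by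
      by_contra h; exact hw (hμ2zero w (by simpa using h)))]
    exact hμ2sumB
  have hπ₀plan : IsPlan (fun q : V × V => μ1 q.1 * μ2 q.2) μ1 μ2 := by
    refine ⟨?_, ?_, ?_, ?_⟩
    · intro q
      constructor
      · exact mul_nonneg (hμ1nn q.1) (hμ2nn q.2)
      · calc μ1 q.1 * μ2 q.2 ≤ 1 * 1 :=
            mul_le_mul (hμ1le q.1) (hμ2le q.2) (hμ2nn q.2) (by norm_num)
          _ = 1 := by norm_num
    · apply Set.Finite.subset (hfinμ1.prod hfinμ2)
      intro q hq
      simp only [Function.mem_support] at hq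
      exact Set.mem_prod.2 ⟨(mul_ne_zero_iff.1 hq).1, (mul_ne_zero_iff.1 hq).2⟩
    · intro u
      rw [← mul_finsum μ2 (μ1 u), hμ2tot, mul_one]
    · intro v
      have h1 : (fun u => μ1 u * μ2 v) = fun u => μ2 v * μ1 u := by
        funext u; ring
      rw [h1, ← mul_finsum μ1 (μ2 v), hμ1tot, mul_one]
  have hπ₀C : (fun q : V × V => μ1 q.1 * μ2 q.2) ∈ C := by
    rw [← hCeq]; exact hπ₀plan
  -- the minimizing plan
  set f : (V × V → ℝ) → ℝ := fun π => ∑ q ∈ K, (G.dist q.1 q.2 : ℝ) * π q with hfdef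
  have hfcont : Continuous f :=
    continuous_finset_sum _ fun q _ => continuous_const.mul (continuous_apply q)
  obtain ⟨P, hPC, hPmin⟩ := hCcompact.exists_isMinOn ⟨_, hπ₀C⟩ hfcont.continuousOn
  have hPplan : IsPlan P μ1 μ2 := by
    have : P ∈ {π : V × V → ℝ | IsPlan π μ1 μ2} := by rw [hCeq]; exact hPC
    exact this
  have hcost_eq : ∀ π : V × V → ℝ, IsPlan π μ1 μ2 → cost G π = f π := by
    intro π hπ
    exact finsum_eq_sum_of_support_subset _ (fun q hq => by
      by_contra hqK
      exact hq (by
        show (G.dist q.1 q.2 : ℝ) * π q = 0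
        rw [hplan_supp π hπ q hqK, mul_zero]))
  have hopt : ∀ π : V × V → ℝ, IsPlan π μ1 μ2 → cost G P ≤ cost G π := by
    intro π hπ
    rw [hcost_eq P hPplan, hcost_eq π hπ]
    exact hPmin (by rw [← hCeq] at *; exact hπ)
  have hW1 : W1 G μ1 μ2 = cost G P := by
    apply IsLeast.csInf_eq
    constructor
    · exact ⟨P, hPplan, rfl⟩
    · rintro r ⟨π, hπ, rfl⟩
      exact hopt π hπ
  -- the support structure of P
  have hPnn : ∀ q, 0 ≤ P q := fun q => (hPplan.1 q).1
  have hProw : ∀ u, ∑ᶠ v, P (u, v) = μ1 u := hPplan.2.2.1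
  set U : Set V := {u | 0 < μ1 u} with hUdef
  have hUb : ∃ b, b ∈ U := by
    by_contra h
    push_neg at h
    have h0 : ∀ u, μ1 u = 0 := fun u => le_antisymm (not_lt.1 (h u)) (hμ1nn u)
    have : (1:ℝ) = 0 := by
      rw [← hμ1tot]
      have : μ1 = fun _ => (0:ℝ) := funext h0
      rw [this, finsum_zero]
    norm_num at this
  obtain ⟨b, hb⟩ := hUb
  have hrow_pos : ∀ u' v, 0 < P (u', v) → u' ∈ U := by
    intro u' v h
    have h1 : P (u', v) ≤ μ1 u' := by
      rw [← hProw u']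
      exact single_le_finsum v (support_slice_fst hPplan.2.1 u') (fun v' => hPnn _)
    exact Set.mem_setOf_eq ▸ lt_of_lt_of_le h h1
  have hNx : ∀ u' ∈ U, ∃ v, 0 < P (u', v) := by
    intro u' hu'
    by_contra h
    push_neg at h
    have h0 : ∀ v, P (u', v) = 0 := fun v => le_antisymm (h v) (hPnn _)
    have h1 := hProw u'
    have h2 : (fun v => P (u', v)) = fun _ => (0:ℝ) := funext h0
    rw [h2, finsum_zero] at h1
    exact absurd h1.symm (ne_of_gt hu')
  set SP : Finset (V × V) := hPplan.2.1.toFinset with hSPdef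
  have hSPmem : ∀ q : V × V, q ∈ SP ↔ 0 < P q := by
    intro q
    rw [hSPdef, Set.Finite.mem_toFinset, Function.mem_support]
    exact ⟨fun h => lt_of_le_of_ne (hPnn q) (Ne.symm h), fun h => ne_of_gt h⟩
  set NxF : V → Finset V := fun u' => (SP.image Prod.snd).filter fun v => 0 < P (u', v) with hNxFdef
  have hNxFmem : ∀ u' v, v ∈ NxF u' ↔ 0 < P (u', v) := by
    intro u' v
    constructor
    · exact fun h => (Finset.mem_filter.1 h).2
    · intro h
      exact Finset.mem_filter.2 ⟨Finset.mem_image.2 ⟨(u', v), (hSPmem (u', v)).2 h, rfl⟩, h⟩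
  have hNxFne : ∀ u' ∈ U, (NxF u').Nonempty := by
    intro u' h
    obtain ⟨v, hv⟩ := hNx u' h
    exact ⟨v, (hNxFmem u' v).2 hv⟩
  set Wt : V → V → ℤ := fun u u' => if h : (NxF u').Nonempty then
    (NxF u').inf' h (fun v => (G.dist u v : ℤ) - (G.dist u' v : ℤ)) else 0 with hWtdef
  set csel : V × V → V := fun pr => if h : (NxF pr.2).Nonempty then
    Classical.choose ((NxF pr.2).exists_mem_eq_inf' h
      (fun v => (G.dist pr.1 v : ℤ) - (G.dist pr.2 v : ℤ))) else pr.2 with hcseldef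
  have hcsel : ∀ pr : V × V, (NxF pr.2).Nonempty → csel pr ∈ NxF pr.2 ∧
      Wt pr.1 pr.2 = (G.dist pr.1 (csel pr) : ℤ) - (G.dist pr.2 (csel pr) : ℤ) := by
    intro pr h
    have hspec := Classical.choose_spec ((NxF pr.2).exists_mem_eq_inf' h
      (fun v => (G.dist pr.1 v : ℤ) - (G.dist pr.2 v : ℤ)))
    rw [hcseldef, hWtdef]
    simp only [dif_pos h]
    exact ⟨hspec.1, hspec.2⟩
  -- closed walk condition
  have hCW : ∀ l : List V, (∀ a ∈ l, a ∈ U) → l.getLastD b = b →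
      0 ≤ ((arcsFrom b l).map fun pr => Wt pr.1 pr.2).sum := by
    intro l hl hlast
    have hsnd : ∀ pr ∈ arcsFrom b l, pr.2 ∈ U := fun pr h => hl _ (arcsFrom_mem h)
    have hmul : (((arcsFrom b l).map Prod.fst : List V) : Multiset V) =
        ((arcsFrom b l).map Prod.snd : List V) := by
      have h1 := arcsFrom_multiset l b
      rw [hlast] at h1
      exact add_right_cancel h1
    have hc : ∀ pr ∈ arcsFrom b l, 0 < P (pr.2, csel pr) := by
      intro pr h
      exact (hNxFmem _ _).1 (hcsel pr (hNxFne pr.2 (hsnd pr h))).1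
    have hXR := exchange G P hPplan hμ1le hopt (arcsFrom b l) csel hmul hc
    have hmap : ((arcsFrom b l).map fun pr =>
        ((G.dist pr.1 (csel pr) : ℝ) - (G.dist pr.2 (csel pr) : ℝ))) =
        (arcsFrom b l).map fun pr => ((Wt pr.1 pr.2 : ℤ) : ℝ) := by
      apply List.map_congr_left
      intro pr h
      rw [(hcsel pr (hNxFne pr.2 (hsnd pr h))).2]
      push_cast
      ring
    rw [hmap, ← list_sum_intcast] at hXR
    exact_mod_cast hXR
  obtain ⟨φ₀, hφ₀⟩ := potential_exists U b hb Wt hCW arcsFrom_append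
  -- complementary slackness type inequality
  have hCS : ∀ u ∈ U, ∀ u' v, 0 < P (u', v) →
      φ₀ u' - φ₀ u ≤ ((G.dist u v : ℤ) - (G.dist u' v : ℤ)) := by
    intro u hu u' v hPuv
    have hu' : u' ∈ U := hrow_pos u' v hPuv
    have h2 := hφ₀ u hu u' hu'
    have h3 : Wt u u' ≤ (G.dist u v : ℤ) - (G.dist u' v : ℤ) := by
      have hv : v ∈ NxF u' := (hNxFmem u' v).2 hPuv
      rw [hWtdef]
      simp only [dif_pos (hNxFne u' hu')]
      exact Finset.inf'_le _ hv
    linarith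
  -- the final potential
  have hSPne : SP.Nonempty := by
    obtain ⟨v, hv⟩ := hNx b hb
    exact ⟨(b, v), (hSPmem (b, v)).2 hv⟩
  set A : V × V → ℤ := fun q => (-(φ₀ q.1)) - (G.dist q.1 q.2 : ℤ) with hAdef
  set φZ : V → ℤ := fun w => SP.inf' hSPne (fun q => A q + (G.dist q.2 w : ℤ)) with hφZdef
  have hφZle : ∀ (w : V), ∀ q ∈ SP, φZ w ≤ A q + (G.dist q.2 w : ℤ) :=
    fun w q h => Finset.inf'_le _ h
  have hφZge : ∀ w : V, ∃ q ∈ SP, φZ w = A q + (G.dist q.2 w : ℤ) :=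
    fun w => SP.exists_mem_eq_inf' hSPne _
  -- triangle inequality in ℤ
  have htri : ∀ a c d : V, (G.dist a d : ℤ) ≤ (G.dist a c : ℤ) + (G.dist c d : ℤ) := by
    intro a c d
    exact_mod_cast hG.dist_triangle
  have hcomm : ∀ a c : V, (G.dist a c : ℤ) = (G.dist c a : ℤ) := by
    intro a c
    norm_cast
    exact G.dist_comm
  -- key lower bound
  have hkey : ∀ u ∈ U, ∀ q' ∈ SP, -(φ₀ u) - (G.dist u q'.2 : ℤ) ≤ A q' := by
    intro u hu q' hq'
    have hP' : 0 < P (q'.1, q'.2) := by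
      rw [Prod.mk.eta]; exact (hSPmem q').1 hq'
    have := hCS u hu q'.1 q'.2 hP'
    rw [hAdef]
    simp only
    linarith
  have hclaim1 : ∀ q ∈ SP, φZ q.2 = A q := by
    intro q hq
    have hle : φZ q.2 ≤ A q := by
      have := hφZle q.2 q hq
      rwa [SimpleGraph.dist_self, Nat.cast_zero, add_zero] at this
    have hge : A q ≤ φZ q.2 := by
      obtain ⟨q', hq', heq⟩ := hφZge q.2
      rw [heq]
      have h1 := hkey q.1 (hrow_pos q.1 q.2 (by rw [Prod.mk.eta]; exact (hSPmem q).1 hq)) q' hq'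
      have h2 := htri q.1 q.2 q'.2
      simp only [hAdef] at h1 ⊢
      linarith [hcomm q.2 q'.2]
    omega
  have hclaim2 : ∀ q ∈ SP, φZ q.1 = -(φ₀ q.1) := by
    intro q hq
    have hq1U : q.1 ∈ U := hrow_pos q.1 q.2 (by rw [Prod.mk.eta]; exact (hSPmem q).1 hq)
    have hle : φZ q.1 ≤ -(φ₀ q.1) := by
      have h1 := hφZle q.1 q hq
      simp only [hAdef] at h1
      linarith [hcomm q.2 q.1]
    have hge : -(φ₀ q.1) ≤ φZ q.1 := by
      obtain ⟨q', hq', heq⟩ := hφZge q.1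
      rw [heq]
      have h1 := hkey q.1 hq1U q' hq'
      simp only [hAdef] at h1 ⊢
      linarith [hcomm q.1 q'.2]
    omega
  -- Lipschitz property of φZ
  have hLipZ : ∀ u w : V, φZ u - φZ w ≤ (G.dist w u : ℤ) := by
    intro u w
    obtain ⟨q, hq, heq⟩ := hφZge w
    have h1 := hφZle u q hq
    have h2 := htri q.2 w u
    rw [heq]
    linarith
  refine ⟨fun w => ((φZ w : ℤ) : ℝ), ?_, fun w => ⟨φZ w, rfl⟩, ?_⟩
  · intro u v
    rw [abs_le]
    constructor
    · have h1 := hLipZ v u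
      have h2 : ((φZ v - φZ u : ℤ) : ℝ) ≤ ((G.dist u v : ℕ) : ℝ) := by exact_mod_cast h1
      push_cast at h2
      linarith
    · have h1 := hLipZ u v
      have h2 : ((φZ u - φZ v : ℤ) : ℝ) ≤ ((G.dist v u : ℕ) : ℝ) := by exact_mod_cast h1
      have hcr : ((G.dist v u : ℕ) : ℝ) = ((G.dist u v : ℕ) : ℝ) := by
        norm_cast
        exact G.dist_comm
      push_cast at h2
      linarith [hcr]
  · -- the main sum computation
    rw [hW1]
    show (∑ᶠ w, ((φZ w : ℤ) : ℝ) * (μ1 w - μ2 w)) = cost G P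
    have hrowF : ∀ u ∈ B1, ∑ v ∈ B2, P (u, v) = μ1 u := by
      intro u hu
      rw [← hProw u]
      exact (finsum_eq_sum_of_support_subset _ (fun v hv => by
        by_contra hvB
        exact hv (hplan_supp P hPplan (u, v) (by
          rw [hKdef, Finset.mem_product]; exact fun h => hvB h.2)))).symm
    have hcolF : ∀ v ∈ B2, ∑ u ∈ B1, P (u, v) = μ2 v := by
      intro v hv
      rw [← hPplan.2.2.2 v]
      exact (finsum_eq_sum_of_support_subset _ (fun u hu => by
        by_contra huB
        exact hu (hplan_supp P hPplan (u, v) (by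
          rw [hKdef, Finset.mem_product]; exact fun h => huB h.1)))).symm
    have h1 : (∑ᶠ w, ((φZ w : ℤ) : ℝ) * (μ1 w - μ2 w)) =
        ∑ w ∈ B1 ∪ B2, ((φZ w : ℤ) : ℝ) * (μ1 w - μ2 w) :=
      finsum_eq_sum_of_support_subset _ (fun w hw => by
        by_contra hwB
        simp only [Finset.coe_union, Set.mem_union, Finset.mem_coe] at hwB
        push_neg at hwB
        exact hw (by
          show ((φZ w : ℤ) : ℝ) * (μ1 w - μ2 w) = 0
          rw [hμ1zero w hwB.1, hμ2zero w hwB.2, sub_zero, mul_zero]))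
    have h2 : ∑ w ∈ B1 ∪ B2, ((φZ w : ℤ) : ℝ) * (μ1 w - μ2 w) =
        (∑ w ∈ B1, ((φZ w : ℤ) : ℝ) * μ1 w) - (∑ w ∈ B2, ((φZ w : ℤ) : ℝ) * μ2 w) := by
      have hterm : ∀ w ∈ B1 ∪ B2, ((φZ w : ℤ) : ℝ) * (μ1 w - μ2 w) =
          ((φZ w : ℤ) : ℝ) * μ1 w - ((φZ w : ℤ) : ℝ) * μ2 w := fun w _ => by ring
      rw [Finset.sum_congr rfl hterm, Finset.sum_sub_distrib]
      congr 1
      · exact (Finset.sum_subset Finset.subset_union_left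
          (fun w _ hw => by rw [hμ1zero w hw, mul_zero])).symm
      · exact (Finset.sum_subset Finset.subset_union_right
          (fun w _ hw => by rw [hμ2zero w hw, mul_zero])).symm
    have h3 : ∑ w ∈ B1, ((φZ w : ℤ) : ℝ) * μ1 w = ∑ q ∈ K, ((φZ q.1 : ℤ) : ℝ) * P q := by
      rw [hKdef, Finset.sum_product]
      apply Finset.sum_congr rfl
      intro u hu
      rw [← hrowF u hu, Finset.mul_sum]
    have h4 : ∑ w ∈ B2, ((φZ w : ℤ) : ℝ) * μ2 w = ∑ q ∈ K, ((φZ q.2 : ℤ) : ℝ) * P q := by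
      rw [hKdef, Finset.sum_product_right]
      apply Finset.sum_congr rfl
      intro v hv
      rw [← hcolF v hv, Finset.mul_sum]
    have h5 : (∑ q ∈ K, ((φZ q.1 : ℤ) : ℝ) * P q) - (∑ q ∈ K, ((φZ q.2 : ℤ) : ℝ) * P q) =
        ∑ q ∈ K, (G.dist q.1 q.2 : ℝ) * P q := by
      rw [← Finset.sum_sub_distrib]
      apply Finset.sum_congr rfl
      intro q hq
      by_cases hPq : 0 < P q
      · have hqSP : q ∈ SP := (hSPmem q).2 hPq
        have e1 := hclaim1 q hqSP
        have e2 := hclaim2 q hqSP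
        have eZ : φZ q.1 - φZ q.2 = (G.dist q.1 q.2 : ℤ) := by
          rw [e2, e1, hAdef]
          ring
        have eR : ((φZ q.1 : ℤ) : ℝ) - ((φZ q.2 : ℤ) : ℝ) = (G.dist q.1 q.2 : ℝ) := by
          have : ((φZ q.1 - φZ q.2 : ℤ) : ℝ) = (((G.dist q.1 q.2 : ℤ)) : ℝ) := by
            exact_mod_cast congrArg (fun z : ℤ => (z : ℝ)) eZ
          push_cast at this
          linarith
        calc ((φZ q.1 : ℤ) : ℝ) * P q - ((φZ q.2 : ℤ) : ℝ) * P q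
            = (((φZ q.1 : ℤ) : ℝ) - ((φZ q.2 : ℤ) : ℝ)) * P q := by ring
          _ = (G.dist q.1 q.2 : ℝ) * P q := by rw [eR]
      · have h0 : P q = 0 := le_antisymm (not_lt.1 hPq) (hPnn q)
        rw [h0, mul_zero, mul_zero, mul_zero, sub_zero]
    rw [h1, h2, h3, h4, h5, hcost_eq P hPplan]
end

section
/- Let μ1 and μ2 be finitely supported probability measures on the vertex set V of G. Then there exists a transport plan π from μ1 to μ2 whose cost equals W_1(μ1, μ2) and which satisfies: for every x ∈ V with μ1(x) ≤ μ2(x), π(x,x) = μ1(x). -/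
open scoped Classical

section AuxStmt9

open Function Set

private lemma finprob_le_one {V : Type*} {μ : V → ℝ} (h : IsFinProb μ) (v : V) : μ v ≤ 1 := by
  obtain ⟨h0, hf, hs⟩ := h
  calc μ v ≤ ∑ᶠ w, μ w := single_le_finsum v hf h0
  _ = 1 := hs

private lemma sum_ite_pair_row {V : Type*} [DecidableEq V] [DecidableEq (V × V)]
    (S : Finset V) (w a b : V) (ε : ℝ) (hb : b ∈ S) :
    ∑ z ∈ S, (if (w, z) = (a, b) then ε else 0) = if w = a then ε else 0 := by
  rw [Finset.sum_congr rfl (fun z _ => show (if (w, z) = (a, b) then ε else 0)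
      = (if w = a then (if z = b then ε else 0) else 0) by
    by_cases h1 : w = a <;> by_cases h2 : z = b <;> simp [h1, h2, Prod.ext_iff])]
  by_cases h1 : w = a <;> simp [h1, hb]

private lemma sum_ite_pair_col {V : Type*} [DecidableEq V] [DecidableEq (V × V)]
    (S : Finset V) (w a b : V) (ε : ℝ) (ha : a ∈ S) :
    ∑ z ∈ S, (if (z, w) = (a, b) then ε else 0) = if w = b then ε else 0 := by
  rw [Finset.sum_congr rfl (fun z _ => show (if (z, w) = (a, b) then ε else 0)
      = (if w = b then (if z = a then ε else 0) else 0) by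
    by_cases h1 : w = b <;> by_cases h2 : z = a <;> simp [h1, h2, Prod.ext_iff])]
  by_cases h1 : w = b <;> simp [h1, ha]

private lemma sum_mul_ite_eq {α : Type*} [DecidableEq α] (T : Finset α) (p : α) (hp : p ∈ T)
    (f : α → ℝ) (ε : ℝ) :
    ∑ q ∈ T, f q * (if q = p then ε else 0) = f p * ε := by
  rw [Finset.sum_congr rfl (fun q _ => show f q * (if q = p then ε else 0)
      = (if q = p then f q * ε else 0) by by_cases h : q = p <;> simp [h])]
  simp [hp]

end AuxStmt9

theorem stmt9 {V : Type*} (G : SimpleGraph V) (hG : G.Connected)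
    (μ1 μ2 : V → ℝ) (h1 : IsFinProb μ1) (h2 : IsFinProb μ2) :
    ∃ π : V × V → ℝ, IsPlan π μ1 μ2 ∧ cost G π = W1 G μ1 μ2 ∧
      ∀ x : V, μ1 x ≤ μ2 x → π (x, x) = μ1 x := by
  classical
  have h10 := h1.1
  have h1f := h1.2.1
  have h1s := h1.2.2
  have h20 := h2.1
  have h2f := h2.2.1
  have h2s := h2.2.2
  set S : Finset V := h1f.toFinset ∪ h2f.toFinset with hSdef
  have hS1 : ∀ u, μ1 u ≠ 0 → u ∈ S := fun u hu =>
    Finset.mem_union_left _ (h1f.mem_toFinset.2 hu)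
  have hS2 : ∀ u, μ2 u ≠ 0 → u ∈ S := fun u hu =>
    Finset.mem_union_right _ (h2f.mem_toFinset.2 hu)
  set T : Finset (V × V) := S ×ˢ S with hTdef
  set A : Set ((V × V) → ℝ) := {π | IsPlan π μ1 μ2} with hAdef
  -- the support of any plan lies in T
  have hsupp : ∀ π ∈ A, ∀ q : V × V, π q ≠ 0 → q ∈ T := by
    rintro π hπ ⟨u, v⟩ hq
    obtain ⟨hb, hfin, hrow, hcol⟩ := hπ
    have hpos : 0 < π (u, v) := lt_of_le_of_ne (hb _).1 (Ne.symm hq)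
    have hrf : (Function.support fun v' => π (u, v')).Finite :=
      (hfin.image Prod.snd).subset fun v' hv' => ⟨(u, v'), hv', rfl⟩
    have hcf : (Function.support fun u' => π (u', v)).Finite :=
      (hfin.image Prod.fst).subset fun u' hu' => ⟨(u', v), hu', rfl⟩
    have h1u : μ1 u ≠ 0 := by
      have h := single_le_finsum (f := fun v' => π (u, v')) v hrf (fun j => (hb _).1)
      rw [hrow u] at h
      exact (lt_of_lt_of_le hpos h).ne'
    have h2v : μ2 v ≠ 0 := by
      have h := single_le_finsum (f := fun u' => π (u', v)) u hcf (fun j => (hb _).1)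
      rw [hcol v] at h
      exact (lt_of_lt_of_le hpos h).ne'
    exact Finset.mem_product.2 ⟨hS1 u h1u, hS2 v h2v⟩
  have hrowS : ∀ π ∈ A, ∀ u, ∑ v ∈ S, π (u, v) = μ1 u := by
    intro π hπ u
    rw [← hπ.2.2.1 u]
    exact (finsum_eq_sum_of_support_subset _ fun v hv =>
      (Finset.mem_product.1 (hsupp π hπ (u, v) hv)).2).symm
  have hcolS : ∀ π ∈ A, ∀ v, ∑ u ∈ S, π (u, v) = μ2 v := by
    intro π hπ v
    rw [← hπ.2.2.2 v]
    exact (finsum_eq_sum_of_support_subset _ fun u hu =>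
      (Finset.mem_product.1 (hsupp π hπ (u, v) hu)).1).symm
  set c : ((V × V) → ℝ) → ℝ := fun π => ∑ q ∈ T, (G.dist q.1 q.2 : ℝ) * π q with hcdef
  have hcostc : ∀ π ∈ A, cost G π = c π := by
    intro π hπ
    exact finsum_eq_sum_of_support_subset _ fun q hq =>
      hsupp π hπ q fun h0 => (Function.mem_support.1 hq) (by rw [h0, mul_zero])
  set B : Set ((V × V) → ℝ) :=
      {π | ∀ q, π q ∈ Set.Icc (0:ℝ) 1} ∩ {π | ∀ q, q ∉ T → π q = 0} ∩
        {π | ∀ u, ∑ v ∈ S, π (u, v) = μ1 u} ∩ {π | ∀ v, ∑ u ∈ S, π (u, v) = μ2 v}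
      with hBdef
  have hmemB : ∀ π : (V × V) → ℝ, π ∈ B ↔ ((∀ q, π q ∈ Set.Icc (0:ℝ) 1) ∧
      (∀ q, q ∉ T → π q = 0) ∧
      (∀ u, ∑ v ∈ S, π (u, v) = μ1 u) ∧ (∀ v, ∑ u ∈ S, π (u, v) = μ2 v)) := by
    intro π
    simp only [hBdef, Set.mem_inter_iff, Set.mem_setOf_eq]
    tauto
  have hAB : A = B := by
    ext π
    rw [hmemB]
    constructor
    · intro hπ
      exact ⟨hπ.1, fun q hqT => by_contra fun hne0 => hqT (hsupp π hπ q hne0),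
        hrowS π hπ, hcolS π hπ⟩
    · rintro ⟨hb, h0, hrow, hcol⟩
      have hsub : Function.support π ⊆ ↑T := fun q hq => by_contra fun h => hq (h0 q h)
      refine ⟨hb, T.finite_toSet.subset hsub, fun u => ?_, fun v => ?_⟩
      · rw [← hrow u]
        exact finsum_eq_sum_of_support_subset _ fun v hv =>
          (Finset.mem_product.1 (hsub (Function.mem_support.2 hv))).2
      · rw [← hcol v]
        exact finsum_eq_sum_of_support_subset _ fun u hu =>
          (Finset.mem_product.1 (hsub (Function.mem_support.2 hu))).1
  have hBclosed : IsClosed B := by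
    rw [hBdef]
    refine IsClosed.inter (IsClosed.inter (IsClosed.inter ?_ ?_) ?_) ?_
    · have h : {π : (V × V) → ℝ | ∀ q, π q ∈ Set.Icc (0:ℝ) 1}
          = ⋂ q, (fun π : (V × V) → ℝ => π q) ⁻¹' Set.Icc (0:ℝ) 1 := by
        ext π; simp
      rw [h]
      exact isClosed_iInter fun q => isClosed_Icc.preimage (continuous_apply q)
    · have h : {π : (V × V) → ℝ | ∀ q, q ∉ T → π q = 0}
          = ⋂ q ∈ {q : V × V | q ∉ T}, (fun π : (V × V) → ℝ => π q) ⁻¹' {0} := by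
        ext π; simp
      rw [h]
      exact isClosed_biInter fun q _ => isClosed_singleton.preimage (continuous_apply q)
    · have h : {π : (V × V) → ℝ | ∀ u, ∑ v ∈ S, π (u, v) = μ1 u}
          = ⋂ u, (fun π : (V × V) → ℝ => ∑ v ∈ S, π (u, v)) ⁻¹' {μ1 u} := by
        ext π; simp
      rw [h]
      exact isClosed_iInter fun u => isClosed_singleton.preimage
        (continuous_finset_sum _ fun v _ => continuous_apply (u, v))
    · have h : {π : (V × V) → ℝ | ∀ v, ∑ u ∈ S, π (u, v) = μ2 v}
          = ⋂ v, (fun π : (V × V) → ℝ => ∑ u ∈ S, π (u, v)) ⁻¹' {μ2 v} := by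
        ext π; simp
      rw [h]
      exact isClosed_iInter fun v => isClosed_singleton.preimage
        (continuous_finset_sum _ fun u _ => continuous_apply (u, v))
  have hBcompact : IsCompact B := by
    refine IsCompact.of_isClosed_subset
      (isCompact_univ_pi fun _ : V × V => isCompact_Icc (a := (0:ℝ)) (b := 1)) hBclosed ?_
    intro π hπ
    exact Set.mem_univ_pi.2 fun q => ((hmemB π).1 hπ).1 q
  have hccont : Continuous c := by
    simp only [hcdef]
    exact continuous_finset_sum _ fun q _ => continuous_const.mul (continuous_apply q)
  have hπ0A : (fun q : V × V => μ1 q.1 * μ2 q.2) ∈ A := by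
    refine ⟨fun q => ⟨mul_nonneg (h10 _) (h20 _), ?_⟩, ?_, fun u => ?_, fun v => ?_⟩
    · show μ1 q.1 * μ2 q.2 ≤ 1
      nlinarith [finprob_le_one h1 q.1, finprob_le_one h2 q.2, h10 q.1, h20 q.2]
    · refine (h1f.prod h2f).subset fun q hq => ?_
      obtain ⟨hl, hr⟩ := mul_ne_zero_iff.1 (Function.mem_support.1 hq)
      exact Set.mem_prod.2 ⟨hl, hr⟩
    · show (∑ᶠ v, μ1 u * μ2 v) = μ1 u
      rw [← mul_finsum μ2 (μ1 u), h2s, mul_one]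
    · show (∑ᶠ u, μ1 u * μ2 v) = μ2 v
      rw [← finsum_mul μ1 (μ2 v), h1s, one_mul]
  have hbdd : BddBelow (cost G '' A) := by
    refine ⟨0, ?_⟩
    rintro y ⟨π, hπ, rfl⟩
    rw [hcostc π hπ]
    exact Finset.sum_nonneg fun q _ => mul_nonneg (Nat.cast_nonneg _) (hπ.1 q).1
  have himg : cost G '' A = c '' B := by
    rw [← hAB]
    exact Set.image_congr hcostc
  have hW1A : W1 G μ1 μ2 = sInf (cost G '' A) := rfl
  have hWmem : W1 G μ1 μ2 ∈ c '' B := by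
    rw [hW1A, himg]
    have hne : (c '' B).Nonempty := ⟨c _, Set.mem_image_of_mem c (hAB ▸ hπ0A)⟩
    exact (hBcompact.image hccont).sInf_mem hne
  obtain ⟨π1, hπ1B, hπ1c⟩ := hWmem
  set B' : Set ((V × V) → ℝ) := B ∩ c ⁻¹' {W1 G μ1 μ2} with hB'def
  have hB'compact : IsCompact B' :=
    hBcompact.inter_right (isClosed_singleton.preimage hccont)
  have hB'ne : B'.Nonempty := ⟨π1, hπ1B, hπ1c⟩
  set D : ((V × V) → ℝ) → ℝ := fun π => ∑ x ∈ S, π (x, x) with hDdef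
  have hDcont : Continuous D := by
    simp only [hDdef]
    exact continuous_finset_sum _ fun x _ => continuous_apply (x, x)
  obtain ⟨π, hπB', hπD⟩ := (hB'compact.image hDcont).sSup_mem (hB'ne.image D)
  have hmax : ∀ ρ ∈ B', D ρ ≤ D π := by
    intro ρ hρ
    rw [hπD]
    exact le_csSup (hB'compact.image hDcont).bddAbove ⟨ρ, hρ, rfl⟩
  have hπA : π ∈ A := by rw [hAB]; exact hπB'.1
  have hπW : c π = W1 G μ1 μ2 := hπB'.2
  refine ⟨π, hπA, by rw [hcostc π hπA, hπW], ?_⟩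
  intro x hx
  by_contra hne
  obtain ⟨hb, h0T, hrowB, hcolB⟩ := (hmemB π).1 hπB'.1
  have hxS : x ∈ S := by
    by_contra hxS
    have hμ0 : μ1 x = 0 := by
      by_contra h
      exact hxS (hS1 x h)
    have hz : π (x, x) = 0 := h0T _ (fun hmem => hxS (Finset.mem_product.1 hmem).1)
    exact hne (hz.trans hμ0.symm)
  have hle : π (x, x) ≤ μ1 x := by
    rw [← hrowB x]
    exact Finset.single_le_sum (f := fun v => π (x, v)) (fun v _ => (hb (x, v)).1) hxS
  have hlt : π (x, x) < μ1 x := lt_of_le_of_ne hle hne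
  have hexu : ∃ u ∈ S, u ≠ x ∧ 0 < π (x, u) := by
    by_contra h
    push_neg at h
    have heq : ∑ v ∈ S, π (x, v) = π (x, x) := by
      refine Finset.sum_eq_single_of_mem x hxS fun v hv hvx => ?_
      exact le_antisymm (h v hv hvx) (hb (x, v)).1
    rw [hrowB x] at heq
    exact absurd heq.symm hlt.ne
  have hexv : ∃ v ∈ S, v ≠ x ∧ 0 < π (v, x) := by
    by_contra h
    push_neg at h
    have heq : ∑ u' ∈ S, π (u', x) = π (x, x) := by
      refine Finset.sum_eq_single_of_mem x hxS fun v hv hvx => ?_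
      exact le_antisymm (h v hv hvx) (hb (v, x)).1
    rw [hcolB x] at heq
    linarith
  obtain ⟨u, huS, hux, hpu⟩ := hexu
  obtain ⟨v, hvS, hvx, hpv⟩ := hexv
  set ε : ℝ := min (π (x, u)) (π (v, x)) with hεdef
  have hε : 0 < ε := lt_min hpu hpv
  have hεu : ε ≤ π (x, u) := min_le_left _ _
  have hεv : ε ≤ π (v, x) := min_le_right _ _
  set π' : (V × V) → ℝ := fun q =>
    π q + (if q = (x, x) then ε else 0) + (if q = (v, u) then ε else 0)
      - (if q = (x, u) then ε else 0) - (if q = (v, x) then ε else 0) with hπ'def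
  have p1 : ((x, x) : V × V) ≠ (v, u) := fun h => hvx (congrArg Prod.fst h).symm
  have p2 : ((x, x) : V × V) ≠ (x, u) := fun h => hux (congrArg Prod.snd h).symm
  have p3 : ((x, x) : V × V) ≠ (v, x) := fun h => hvx (congrArg Prod.fst h).symm
  have p4 : ((v, u) : V × V) ≠ (x, u) := fun h => hvx (congrArg Prod.fst h)
  have p5 : ((v, u) : V × V) ≠ (v, x) := fun h => hux (congrArg Prod.snd h)
  have p6 : ((x, u) : V × V) ≠ (v, x) := fun h => hux (congrArg Prod.snd h)
  have e1 : π' (x, x) = π (x, x) + ε := by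
    simp only [hπ'def]
    rw [if_neg p1, if_neg p2, if_neg p3]
    simp
  have e2 : π' (v, u) = π (v, u) + ε := by
    simp only [hπ'def]
    rw [if_neg (Ne.symm p1), if_neg p4, if_neg p5]
    simp
  have e3 : π' (x, u) = π (x, u) - ε := by
    simp only [hπ'def]
    rw [if_neg (Ne.symm p2), if_neg (Ne.symm p4), if_neg p6]
    simp
  have e4 : π' (v, x) = π (v, x) - ε := by
    simp only [hπ'def]
    rw [if_neg (Ne.symm p3), if_neg (Ne.symm p5), if_neg (Ne.symm p6)]
    simp
  have e5 : ∀ q, q ≠ (x, x) → q ≠ (v, u) → q ≠ (x, u) → q ≠ (v, x) → π' q = π q := by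
    intro q hq1 hq2 hq3 hq4
    simp only [hπ'def]
    rw [if_neg hq1, if_neg hq2, if_neg hq3, if_neg hq4]
    ring
  have hxxT : ((x, x) : V × V) ∈ T := Finset.mem_product.2 ⟨hxS, hxS⟩
  have hvuT : ((v, u) : V × V) ∈ T := Finset.mem_product.2 ⟨hvS, huS⟩
  have hxuT : ((x, u) : V × V) ∈ T := Finset.mem_product.2 ⟨hxS, huS⟩
  have hvxT : ((v, x) : V × V) ∈ T := Finset.mem_product.2 ⟨hvS, hxS⟩
  have pairle : ∀ a b1 b2 : V, b1 ∈ S → b2 ∈ S → b1 ≠ b2 →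
      π (a, b1) + π (a, b2) ≤ μ1 a := by
    intro a b1 b2 hb1 hb2 hbne
    rw [← hrowB a, ← Finset.sum_pair (f := fun z => π (a, z)) hbne]
    exact Finset.sum_le_sum_of_subset_of_nonneg
      (Finset.insert_subset_iff.2 ⟨hb1, Finset.singleton_subset_iff.2 hb2⟩)
      (fun z hz _ => (hb (a, z)).1)
  have hμ1le : ∀ w, μ1 w ≤ 1 := finprob_le_one h1
  have hπ'B : π' ∈ B := by
    rw [hmemB]
    refine ⟨?_, ?_, ?_, ?_⟩
    · intro q
      rcases eq_or_ne q (x, x) with rfl | hq1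
      · rw [e1]
        refine ⟨add_nonneg (hb _).1 hε.le, ?_⟩
        have h5 := pairle x x u hxS huS (Ne.symm hux)
        have h6 := hμ1le x
        linarith
      rcases eq_or_ne q (v, u) with rfl | hq2
      · rw [e2]
        refine ⟨add_nonneg (hb _).1 hε.le, ?_⟩
        have h5 := pairle v u x huS hxS hux
        have h6 := hμ1le v
        linarith
      rcases eq_or_ne q (x, u) with rfl | hq3
      · rw [e3]
        exact ⟨by linarith, by linarith [(hb ((x, u) : V × V)).2]⟩
      rcases eq_or_ne q (v, x) with rfl | hq4
      · rw [e4]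
        exact ⟨by linarith, by linarith [(hb ((v, x) : V × V)).2]⟩
      rw [e5 q hq1 hq2 hq3 hq4]
      exact hb q
    · intro q hq
      have hq1 : q ≠ (x, x) := fun h => hq (by rw [h]; exact hxxT)
      have hq2 : q ≠ (v, u) := fun h => hq (by rw [h]; exact hvuT)
      have hq3 : q ≠ (x, u) := fun h => hq (by rw [h]; exact hxuT)
      have hq4 : q ≠ (v, x) := fun h => hq (by rw [h]; exact hvxT)
      rw [e5 q hq1 hq2 hq3 hq4]
      exact h0T q hq
    · intro w
      simp only [hπ'def]
      rw [Finset.sum_sub_distrib, Finset.sum_sub_distrib, Finset.sum_add_distrib,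
        Finset.sum_add_distrib, sum_ite_pair_row S w x x ε hxS, sum_ite_pair_row S w v u ε huS,
        sum_ite_pair_row S w x u ε huS, sum_ite_pair_row S w v x ε hxS, ← hrowB w]
      ring
    · intro w
      simp only [hπ'def]
      rw [Finset.sum_sub_distrib, Finset.sum_sub_distrib, Finset.sum_add_distrib,
        Finset.sum_add_distrib, sum_ite_pair_col S w x x ε hxS, sum_ite_pair_col S w v u ε hvS,
        sum_ite_pair_col S w x u ε hxS, sum_ite_pair_col S w v x ε hvS, ← hcolB w]
      ring
  have hπ'A : π' ∈ A := by rw [hAB]; exact hπ'B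
  have hcπ' : c π' = c π + (G.dist x x : ℝ) * ε + (G.dist v u : ℝ) * ε
      - (G.dist x u : ℝ) * ε - (G.dist v x : ℝ) * ε := by
    simp only [hcdef, hπ'def]
    rw [Finset.sum_congr rfl (fun q _ => show
      (G.dist q.1 q.2 : ℝ) * (π q + (if q = (x, x) then ε else 0)
          + (if q = (v, u) then ε else 0)
          - (if q = (x, u) then ε else 0) - (if q = (v, x) then ε else 0))
      = (G.dist q.1 q.2 : ℝ) * π q
        + (fun r : V × V => (G.dist r.1 r.2 : ℝ)) q * (if q = (x, x) then ε else 0)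
        + (fun r : V × V => (G.dist r.1 r.2 : ℝ)) q * (if q = (v, u) then ε else 0)
        - (fun r : V × V => (G.dist r.1 r.2 : ℝ)) q * (if q = (x, u) then ε else 0)
        - (fun r : V × V => (G.dist r.1 r.2 : ℝ)) q * (if q = (v, x) then ε else 0) by ring)]
    rw [Finset.sum_sub_distrib, Finset.sum_sub_distrib, Finset.sum_add_distrib,
      Finset.sum_add_distrib, sum_mul_ite_eq T (x, x) hxxT _ ε,
      sum_mul_ite_eq T (v, u) hvuT _ ε, sum_mul_ite_eq T (x, u) hxuT _ ε,
      sum_mul_ite_eq T (v, x) hvxT _ ε]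
  have htri : (G.dist v u : ℝ) ≤ (G.dist v x : ℝ) + (G.dist x u : ℝ) := by
    exact_mod_cast hG.dist_triangle
  have hds : G.dist x x = 0 := SimpleGraph.dist_self
  have hcle : c π' ≤ c π := by
    rw [hcπ', hds]
    push_cast
    nlinarith [mul_le_mul_of_nonneg_right htri hε.le]
  have hcge : W1 G μ1 μ2 ≤ c π' := by
    rw [hW1A]
    have hmem : cost G π' ∈ cost G '' A := Set.mem_image_of_mem _ hπ'A
    have h' := csInf_le hbdd hmem
    rwa [hcostc π' hπ'A] at h'
  have hc'eq : c π' = W1 G μ1 μ2 := le_antisymm (hcle.trans (le_of_eq hπW)) hcge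
  have hπ'B' : π' ∈ B' := ⟨hπ'B, hc'eq⟩
  have hDgt : D π + ε ≤ D π' := by
    simp only [hDdef, hπ'def]
    rw [Finset.sum_sub_distrib, Finset.sum_sub_distrib, Finset.sum_add_distrib,
      Finset.sum_add_distrib]
    have t1 : ∑ w ∈ S, (if ((w, w) : V × V) = (x, x) then ε else 0) = ε := by
      rw [Finset.sum_congr rfl (fun w _ => show (if ((w, w) : V × V) = (x, x) then ε else 0)
          = (if w = x then ε else 0) by
        by_cases h : w = x <;> simp [h, Prod.ext_iff])]
      simp [hxS]
    have t2 : (0:ℝ) ≤ ∑ w ∈ S, (if ((w, w) : V × V) = (v, u) then ε else 0) :=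
      Finset.sum_nonneg fun w _ => by split <;> simp [hε.le]
    have t3 : ∑ w ∈ S, (if ((w, w) : V × V) = (x, u) then ε else 0) = 0 :=
      Finset.sum_eq_zero fun w _ => if_neg fun h => by
        rw [Prod.mk.injEq] at h
        exact hux (h.2.symm.trans h.1)
    have t4 : ∑ w ∈ S, (if ((w, w) : V × V) = (v, x) then ε else 0) = 0 :=
      Finset.sum_eq_zero fun w _ => if_neg fun h => by
        rw [Prod.mk.injEq] at h
        exact hvx (h.1.symm.trans h.2)
    rw [t1, t3, t4]
    linarith
  have hfinal := hmax π' hπ'B'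
  linarith
end

section
/- Let x∼y be an edge of G and let 0 ≤ p1 ≤ p2 ≤ 1. Suppose there exists a single 1-Lipschitz function φ with Σ_w φ(w)·(μ_x^{p1}(w) − μ_y^{p1}(w)) = W_1(μ_x^{p1}, μ_y^{p1}) and Σ_w φ(w)·(μ_x^{p2}(w) − μ_y^{p2}(w)) = W_1(μ_x^{p2}, μ_y^{p2}). Then the function W_{xy}(p) = W_1(μ_x^p, μ_y^p) is linear on [p1, p2]: for every α ∈ [0,1], W_{xy}(α·p1 + (1−α)·p2) = α·W_{xy}(p1) + (1−α)·W_{xy}(p2). -/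
open scoped Classical

section helpers

variable {V : Type*} (G : SimpleGraph V) [G.LocallyFinite]

lemma mu_affine (x : V) (p1 p2 α : ℝ) (z : V) :
    mu G x (α * p1 + (1 - α) * p2) z = α * mu G x p1 z + (1 - α) * mu G x p2 z := by
  unfold mu
  split_ifs <;> ring

lemma mu_zero_of {x z : V} (p : ℝ) (h1 : z ≠ x) (h2 : ¬ G.Adj x z) : mu G x p z = 0 := by
  simp [mu, h1, h2]

lemma mu_support_subset (x : V) (p : ℝ) :
    Function.support (mu G x p) ⊆ ↑(insert x (G.neighborFinset x)) := by
  intro z hz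
  simp only [Finset.coe_insert, Set.mem_insert_iff, Finset.mem_coe,
    SimpleGraph.mem_neighborFinset]
  by_contra hc
  push_neg at hc
  exact hz (mu_zero_of G p hc.1 hc.2)

lemma mu_finsum (x : V) (p : ℝ) (hd : 0 < G.degree x) : ∑ᶠ z, mu G x p z = 1 := by
  rw [finsum_eq_sum_of_support_subset _ (mu_support_subset G x p)]
  have hx : x ∉ G.neighborFinset x := by
    simp [SimpleGraph.mem_neighborFinset]
  rw [Finset.sum_insert hx]
  have h1 : mu G x p x = p := by simp [mu]
  have h2 : ∑ z ∈ G.neighborFinset x, mu G x p z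
      = (G.degree x : ℝ) * ((1 - p) / (G.degree x : ℝ)) := by
    rw [Finset.sum_congr rfl (fun z hz => ?_), Finset.sum_const,
      SimpleGraph.card_neighborFinset_eq_degree, nsmul_eq_mul]
    have hadj : G.Adj x z := (SimpleGraph.mem_neighborFinset _ _ _).1 hz
    have hne : z ≠ x := fun h => (h ▸ hadj).ne rfl
    simp [mu, hne, hadj]
  rw [h1, h2]
  have : (G.degree x : ℝ) ≠ 0 := by positivity
  field_simp
  ring

lemma mu_mem_Icc (x : V) {p : ℝ} (hd : 0 < G.degree x) (hp0 : 0 ≤ p) (hp1 : p ≤ 1) (z : V) :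
    mu G x p z ∈ Set.Icc (0 : ℝ) 1 := by
  have hd1 : (1 : ℝ) ≤ (G.degree x : ℝ) := by exact_mod_cast hd
  unfold mu
  split_ifs with h1 h2
  · exact ⟨hp0, hp1⟩
  · constructor
    · apply div_nonneg <;> linarith
    · rw [div_le_one (by linarith)]; linarith
  · norm_num

lemma product_plan (x y : V) {p : ℝ} (hdx : 0 < G.degree x) (hdy : 0 < G.degree y)
    (hp0 : 0 ≤ p) (hp1 : p ≤ 1) :
    IsPlan (fun q : V × V => mu G x p q.1 * mu G y p q.2) (mu G x p) (mu G y p) := by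
  have hIx := mu_mem_Icc G x hdx hp0 hp1
  have hIy := mu_mem_Icc G y hdy hp0 hp1
  have hfx : (Function.support (mu G x p)).Finite :=
    Set.Finite.subset (Finset.finite_toSet _) (mu_support_subset G x p)
  have hfy : (Function.support (mu G y p)).Finite :=
    Set.Finite.subset (Finset.finite_toSet _) (mu_support_subset G y p)
  refine ⟨?_, ?_, ?_, ?_⟩
  · intro q
    exact ⟨mul_nonneg (hIx q.1).1 (hIy q.2).1,
      mul_le_one₀ (hIx q.1).2 (hIy q.2).1 (hIy q.2).2⟩
  · apply Set.Finite.subset (hfx.prod hfy)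
    intro q hq
    constructor
    · intro h; apply hq; simp [Function.mem_support] at h ⊢; simp [h]
    · intro h; apply hq; simp [Function.mem_support] at h ⊢; simp [h]
  · intro u
    show ∑ᶠ v, mu G x p u * mu G y p v = mu G x p u
    rw [← mul_finsum _ _, mu_finsum G y p hdy, mul_one]
  · intro v
    show ∑ᶠ u, mu G x p u * mu G y p v = mu G y p v
    rw [← finsum_mul _ _, mu_finsum G x p hdx, one_mul]

lemma dual_le {φ : V → ℝ} (hφ : IsLip G φ)
    {μ1 μ2 : V → ℝ} {π : V × V → ℝ} (hπ : IsPlan π μ1 μ2) :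
    ∑ᶠ w, φ w * (μ1 w - μ2 w) ≤ cost G π := by
  obtain ⟨hrange, hfin, hm1, hm2⟩ := hπ
  set T : Finset (V × V) := hfin.toFinset with hT
  have hmemT : ∀ q : V × V, π q ≠ 0 → q ∈ T := fun q hq => hfin.mem_toFinset.2 hq
  set C : Finset V := T.image Prod.fst ∪ T.image Prod.snd with hC
  have hfstC : ∀ q : V × V, π q ≠ 0 → q.1 ∈ C := fun q hq =>
    Finset.mem_union_left _ (Finset.mem_image_of_mem Prod.fst (hmemT q hq))
  have hsndC : ∀ q : V × V, π q ≠ 0 → q.2 ∈ C := fun q hq =>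
    Finset.mem_union_right _ (Finset.mem_image_of_mem Prod.snd (hmemT q hq))
  have hrow : ∀ u, (Function.support fun v => π (u, v)) ⊆ ↑C := by
    intro u v hv
    exact hsndC (u, v) hv
  have hcol : ∀ v, (Function.support fun u => π (u, v)) ⊆ ↑C := by
    intro v u hu
    exact hfstC (u, v) hu
  have hm1' : ∀ u, μ1 u = ∑ v ∈ C, π (u, v) := fun u => by
    rw [← hm1 u, finsum_eq_sum_of_support_subset _ (hrow u)]
  have hm2' : ∀ v, μ2 v = ∑ u ∈ C, π (u, v) := fun v => by
    rw [← hm2 v, finsum_eq_sum_of_support_subset _ (hcol v)]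
  have hsupp : (Function.support fun w => φ w * (μ1 w - μ2 w)) ⊆ ↑C := by
    intro w hw
    by_contra hwC
    apply hw
    have h1 : μ1 w = 0 := by
      rw [hm1' w]
      apply Finset.sum_eq_zero
      intro v _
      by_contra hne
      exact hwC (hfstC (w, v) hne)
    have h2 : μ2 w = 0 := by
      rw [hm2' w]
      apply Finset.sum_eq_zero
      intro u _
      by_contra hne
      exact hwC (hsndC (u, w) hne)
    simp [h1, h2]
  have hcost : cost G π = ∑ u ∈ C, ∑ v ∈ C, (G.dist u v : ℝ) * π (u, v) := by
    rw [cost, finsum_eq_sum_of_support_subset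
      (fun q : V × V => (G.dist q.1 q.2 : ℝ) * π q)
      (show _ ⊆ ((C ×ˢ C : Finset (V × V)) : Set (V × V)) from ?_), Finset.sum_product]
    intro q hq
    have hπq : π q ≠ 0 := by
      intro h; apply hq; simp [Function.mem_support, h]
    exact Finset.mem_product.2 ⟨hfstC q hπq, hsndC q hπq⟩
  rw [finsum_eq_sum_of_support_subset _ hsupp, hcost]
  calc ∑ w ∈ C, φ w * (μ1 w - μ2 w)
      = ∑ u ∈ C, ∑ v ∈ C, (φ u - φ v) * π (u, v) := by
        rw [Finset.sum_congr rfl (fun w _ => by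
          rw [hm1' w, hm2' w, mul_sub, Finset.mul_sum, Finset.mul_sum]),
          Finset.sum_sub_distrib, Finset.sum_comm (s := C) (t := C)
            (f := fun w u => φ w * π (u, w)), ← Finset.sum_sub_distrib]
        refine Finset.sum_congr rfl (fun u _ => ?_)
        rw [← Finset.sum_sub_distrib]
        exact Finset.sum_congr rfl (fun v _ => by ring)
    _ ≤ ∑ u ∈ C, ∑ v ∈ C, (G.dist u v : ℝ) * π (u, v) := by
        refine Finset.sum_le_sum (fun u _ => Finset.sum_le_sum (fun v _ => ?_))
        exact mul_le_mul_of_nonneg_right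
          (le_trans (le_abs_self _) (hφ u v)) (hrange (u, v)).1

lemma marginal_support_finite {π : V × V → ℝ} (hfin : (Function.support π).Finite) (u : V) :
    (Function.support fun v => π (u, v)).Finite := by
  have : (Function.support fun v => π (u, v)) = Prod.mk u ⁻¹' Function.support π := rfl
  rw [this]
  exact Set.Finite.preimage
    (Function.Injective.injOn (fun a b h => (Prod.ext_iff.1 h).2)) hfin

lemma plan_convex {π1 π2 : V × V → ℝ} {μ1 μ2 ν1 ν2 : V → ℝ}
    (h1 : IsPlan π1 μ1 μ2) (h2 : IsPlan π2 ν1 ν2) {α : ℝ} (hα0 : 0 ≤ α) (hα1 : α ≤ 1) :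
    IsPlan (fun q => α * π1 q + (1 - α) * π2 q)
      (fun u => α * μ1 u + (1 - α) * ν1 u) (fun v => α * μ2 v + (1 - α) * ν2 v) := by
  obtain ⟨hr1, hf1, hm11, hm12⟩ := h1
  obtain ⟨hr2, hf2, hm21, hm22⟩ := h2
  refine ⟨?_, ?_, ?_, ?_⟩
  · intro q
    have a1 := hr1 q; have a2 := hr2 q
    simp only [Set.mem_Icc] at a1 a2 ⊢
    constructor
    · nlinarith [a1.1, a2.1]
    · nlinarith [a1.2, a2.2]
  · apply Set.Finite.subset (hf1.union hf2)
    intro q hq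
    by_contra hc
    simp only [Set.mem_union, Function.mem_support, not_or, not_not] at hc
    exact hq (by simp [Function.mem_support, hc.1, hc.2])
  · intro u
    rw [finsum_add_distrib
        ((marginal_support_finite hf1 u).subset (Function.support_mul_subset_right _ _))
        ((marginal_support_finite hf2 u).subset (Function.support_mul_subset_right _ _)),
      ← mul_finsum _ _,
      ← mul_finsum _ _, hm11 u, hm21 u]
  · intro v
    have c1 : (Function.support fun u => π1 (u, v)).Finite := by
      have : (Function.support fun u => π1 (u, v)) = (fun u => (u, v)) ⁻¹' Function.support π1 := rfl
      rw [this]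
      exact Set.Finite.preimage
        (Function.Injective.injOn (fun a b h => (Prod.ext_iff.1 h).1)) hf1
    have c2 : (Function.support fun u => π2 (u, v)).Finite := by
      have : (Function.support fun u => π2 (u, v)) = (fun u => (u, v)) ⁻¹' Function.support π2 := rfl
      rw [this]
      exact Set.Finite.preimage
        (Function.Injective.injOn (fun a b h => (Prod.ext_iff.1 h).1)) hf2
    rw [finsum_add_distrib
        (c1.subset (Function.support_mul_subset_right _ _))
        (c2.subset (Function.support_mul_subset_right _ _)),
      ← mul_finsum _ _, ← mul_finsum _ _, hm12 v, hm22 v]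

lemma cost_convex {π1 π2 : V × V → ℝ}
    (h1 : (Function.support π1).Finite) (h2 : (Function.support π2).Finite) (α β : ℝ) :
    cost G (fun q => α * π1 q + β * π2 q) = α * cost G π1 + β * cost G π2 := by
  set T : Finset (V × V) := (h1.union h2).toFinset with hT
  have hsub1 : (Function.support fun q : V × V => (G.dist q.1 q.2 : ℝ) * π1 q) ⊆ ↑T := by
    intro q hq
    have : π1 q ≠ 0 := by intro h; apply hq; simp [Function.mem_support, h]
    simp [hT, Set.Finite.mem_toFinset]
    exact Or.inl this
  have hsub2 : (Function.support fun q : V × V => (G.dist q.1 q.2 : ℝ) * π2 q) ⊆ ↑T := by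
    intro q hq
    have : π2 q ≠ 0 := by intro h; apply hq; simp [Function.mem_support, h]
    simp [hT, Set.Finite.mem_toFinset]
    exact Or.inr this
  have hsub : (Function.support fun q : V × V =>
      (G.dist q.1 q.2 : ℝ) * (α * π1 q + β * π2 q)) ⊆ ↑T := by
    intro q hq
    have : ¬ (π1 q = 0 ∧ π2 q = 0) := by
      rintro ⟨e1, e2⟩; apply hq; simp [Function.mem_support, e1, e2]
    simp [hT, Set.Finite.mem_toFinset]
    by_contra hc
    push_neg at hc
    exact this ⟨hc.1, hc.2⟩
  rw [cost, cost, cost, finsum_eq_sum_of_support_subset _ hsub,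
    finsum_eq_sum_of_support_subset _ hsub1, finsum_eq_sum_of_support_subset _ hsub2,
    Finset.mul_sum, Finset.mul_sum, ← Finset.sum_add_distrib]
  exact Finset.sum_congr rfl (fun q _ => by ring)

end helpers

theorem stmt10 {V : Type*} (G : SimpleGraph V) [G.LocallyFinite] (hG : G.Connected)
    (x y : V) (hxy : G.Adj x y) (p1 p2 : ℝ)
    (hp1 : 0 ≤ p1) (hp12 : p1 ≤ p2) (hp2 : p2 ≤ 1)
    (φ : V → ℝ) (hφ : IsLip G φ)
    (hopt1 : ∑ᶠ w, φ w * (mu G x p1 w - mu G y p1 w) = W1 G (mu G x p1) (mu G y p1))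
    (hopt2 : ∑ᶠ w, φ w * (mu G x p2 w - mu G y p2 w) = W1 G (mu G x p2) (mu G y p2)) :
    ∀ α ∈ Set.Icc (0 : ℝ) 1,
      W1 G (mu G x (α * p1 + (1 - α) * p2)) (mu G y (α * p1 + (1 - α) * p2)) =
        α * W1 G (mu G x p1) (mu G y p1) + (1 - α) * W1 G (mu G x p2) (mu G y p2) := by
  rintro α ⟨hα0, hα1⟩
  have hdx : 0 < G.degree x := by
    rw [← SimpleGraph.card_neighborFinset_eq_degree]
    exact Finset.card_pos.2 ⟨y, (SimpleGraph.mem_neighborFinset _ _ _).2 hxy⟩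
  have hdy : 0 < G.degree y := by
    rw [← SimpleGraph.card_neighborFinset_eq_degree]
    exact Finset.card_pos.2 ⟨x, (SimpleGraph.mem_neighborFinset _ _ _).2 hxy.symm⟩
  set p : ℝ := α * p1 + (1 - α) * p2 with hp
  have hp0 : 0 ≤ p := by nlinarith
  have hp1' : p ≤ 1 := by nlinarith
  have hp10 : p1 ≤ 1 := le_trans hp12 hp2
  have hp20 : 0 ≤ p2 := le_trans hp1 hp12
  -- the sets of plan costs
  set S := cost G '' {π | IsPlan π (mu G x p) (mu G y p)} with hS
  set S1 := cost G '' {π | IsPlan π (mu G x p1) (mu G y p1)} with hS1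
  set S2 := cost G '' {π | IsPlan π (mu G x p2) (mu G y p2)} with hS2
  have hne : S.Nonempty := ⟨_, ⟨_, product_plan G x y hdx hdy hp0 hp1', rfl⟩⟩
  have hne1 : S1.Nonempty := ⟨_, ⟨_, product_plan G x y hdx hdy hp1 hp10, rfl⟩⟩
  have hne2 : S2.Nonempty := ⟨_, ⟨_, product_plan G x y hdx hdy hp20 hp2, rfl⟩⟩
  -- affinity of the dual value
  set D : Finset V := insert x (G.neighborFinset x) ∪ insert y (G.neighborFinset y) with hD
  have hsuppD : ∀ q : ℝ, (Function.support fun w => φ w * (mu G x q w - mu G y q w)) ⊆ ↑D := by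
    intro q w hw
    by_contra hc
    simp only [hD, Finset.coe_union, Set.mem_union, Finset.coe_insert, Finset.mem_coe,
      Set.mem_insert_iff, SimpleGraph.mem_neighborFinset, not_or] at hc
    push_neg at hc
    apply hw
    show φ w * (mu G x q w - mu G y q w) = 0
    rw [mu_zero_of G q hc.1.1 hc.1.2, mu_zero_of G q hc.2.1 hc.2.2]
    ring
  have hL : ∑ᶠ w, φ w * (mu G x p w - mu G y p w)
      = α * ∑ᶠ w, φ w * (mu G x p1 w - mu G y p1 w)
        + (1 - α) * ∑ᶠ w, φ w * (mu G x p2 w - mu G y p2 w) := by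
    rw [finsum_eq_sum_of_support_subset _ (hsuppD p),
      finsum_eq_sum_of_support_subset _ (hsuppD p1),
      finsum_eq_sum_of_support_subset _ (hsuppD p2),
      Finset.mul_sum, Finset.mul_sum, ← Finset.sum_add_distrib]
    refine Finset.sum_congr rfl (fun w _ => ?_)
    rw [hp, mu_affine G x p1 p2 α w, mu_affine G y p1 p2 α w]
    ring
  -- lower bound
  have hlow : α * W1 G (mu G x p1) (mu G y p1) + (1 - α) * W1 G (mu G x p2) (mu G y p2)
      ≤ W1 G (mu G x p) (mu G y p) := by
    rw [← hopt1, ← hopt2, ← hL]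
    apply le_csInf hne
    rintro b ⟨π, hπ, rfl⟩
    exact dual_le G hφ hπ
  -- upper bound
  have hbdd : BddBelow S := by
    refine ⟨∑ᶠ w, φ w * (mu G x p w - mu G y p w), ?_⟩
    rintro b ⟨π, hπ, rfl⟩
    exact dual_le G hφ hπ
  have hup : W1 G (mu G x p) (mu G y p)
      ≤ α * W1 G (mu G x p1) (mu G y p1) + (1 - α) * W1 G (mu G x p2) (mu G y p2) := by
    apply le_of_forall_pos_le_add
    intro ε hε
    obtain ⟨c1, hc1S, hc1⟩ := Real.lt_sInf_add_pos hne1 hε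
    obtain ⟨c2, hc2S, hc2⟩ := Real.lt_sInf_add_pos hne2 hε
    obtain ⟨π1, hπ1, rfl⟩ := hc1S
    obtain ⟨π2, hπ2, rfl⟩ := hc2S
    have hmix := plan_convex hπ1 hπ2 hα0 hα1
    have hmx : (fun u => α * mu G x p1 u + (1 - α) * mu G x p2 u) = mu G x p := by
      funext u; rw [hp, mu_affine]
    have hmy : (fun u => α * mu G y p1 u + (1 - α) * mu G y p2 u) = mu G y p := by
      funext u; rw [hp, mu_affine]
    rw [hmx, hmy] at hmix
    have hle : W1 G (mu G x p) (mu G y p) ≤ cost G (fun q => α * π1 q + (1 - α) * π2 q) :=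
      csInf_le hbdd ⟨_, hmix, rfl⟩
    rw [cost_convex G hπ1.2.1 hπ2.2.1] at hle
    have e1 : W1 G (mu G x p1) (mu G y p1) = sInf S1 := rfl
    have e2 : W1 G (mu G x p2) (mu G y p2) = sInf S2 := rfl
    nlinarith [mul_le_mul_of_nonneg_left (le_of_lt hc1) hα0,
      mul_le_mul_of_nonneg_left (le_of_lt hc2) (by linarith : (0:ℝ) ≤ 1 - α)]
  linarith
end

section
/- Let x∼y be an edge of G. Then the supremum of F(φ) over all 1-Lipschitz functions φ : V → ℤ with φ(x) = φ(y) = 0 equals the supremum of F(φ) over all 1-Lipschitz functions φ : V → (1/2)·ℤ (half-integer valued) with φ(x) = φ(y) = 0. -/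
open scoped Classical

lemma aux_bound {V : Type*} (G : SimpleGraph V) [G.LocallyFinite]
    (x y : V) (φ : V → ℝ) (hφ : IsLip G φ)
    (hx : φ x = 0) (hy : φ y = 0) :
    Fpot G x y φ ≤ (G.degree y : ℝ) * G.degree x + (G.degree x : ℝ) * G.degree y := by
  have key : ∀ a z : V, G.Adj a z → φ a = 0 → |φ z| ≤ 1 := by
    intro a z ha h0
    have hd : (G.dist z a : ℝ) ≤ 1 := by
      have := SimpleGraph.dist_le ha.symm.toWalk
      simp at this
      exact_mod_cast this
    have := hφ z a
    rw [h0] at this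
    simpa using this.trans hd
  have h1 : ∑ z ∈ (G.neighborFinset x).erase y, φ z ≤ (G.degree x : ℝ) := by
    calc ∑ z ∈ (G.neighborFinset x).erase y, φ z
        ≤ ∑ z ∈ (G.neighborFinset x).erase y, (1:ℝ) := by
          refine Finset.sum_le_sum fun z hz => ?_
          have hz' : G.Adj x z := by
            have := Finset.mem_of_mem_erase hz
            simpa using this
          exact (abs_le.1 (key x z hz' hx)).2
      _ = ((G.neighborFinset x).erase y).card := by simp
      _ ≤ (G.degree x : ℝ) := by
          have := Finset.card_erase_le (a := y) (s := G.neighborFinset x)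
          rw [← G.card_neighborFinset_eq_degree]
          exact_mod_cast this
  have h2 : -(G.degree y : ℝ) ≤ ∑ z ∈ (G.neighborFinset y).erase x, φ z := by
    calc -(G.degree y : ℝ) ≤ -(((G.neighborFinset y).erase x).card : ℝ) := by
          have := Finset.card_erase_le (a := x) (s := G.neighborFinset y)
          rw [← G.card_neighborFinset_eq_degree]
          simp only [neg_le_neg_iff]
          exact_mod_cast this
      _ = ∑ z ∈ (G.neighborFinset y).erase x, (-1:ℝ) := by simp
      _ ≤ ∑ z ∈ (G.neighborFinset y).erase x, φ z := by
          refine Finset.sum_le_sum fun z hz => ?_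
          have hz' : G.Adj y z := by
            have := Finset.mem_of_mem_erase hz
            simpa using this
          exact (abs_le.1 (key y z hz' hy)).1
  have hdx : (0:ℝ) ≤ G.degree x := by positivity
  have hdy : (0:ℝ) ≤ G.degree y := by positivity
  unfold Fpot
  nlinarith [mul_le_mul_of_nonneg_left h1 hdy, mul_le_mul_of_nonneg_left h2 hdx]

lemma aux_lip_ceil {V : Type*} (G : SimpleGraph V) (φ : V → ℝ) (hφ : IsLip G φ) :
    IsLip G (fun w => (⌈φ w⌉ : ℝ)) := by
  intro u v
  have h := abs_le.1 (hφ u v)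
  have h' := abs_le.1 (hφ v u)
  rw [SimpleGraph.dist_comm] at h'
  have h1 : ⌈φ u⌉ ≤ ⌈φ v⌉ + (G.dist u v : ℤ) := by
    rw [← Int.ceil_add_intCast]
    exact Int.ceil_le_ceil (by push_cast; linarith [h.2])
  have h2 : ⌈φ v⌉ ≤ ⌈φ u⌉ + (G.dist u v : ℤ) := by
    rw [← Int.ceil_add_intCast]
    exact Int.ceil_le_ceil (by push_cast; linarith [h'.2])
  have : |(⌈φ u⌉ - ⌈φ v⌉ : ℤ)| ≤ (G.dist u v : ℤ) := abs_le.2 ⟨by omega, by omega⟩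
  calc |((⌈φ u⌉ : ℝ)) - ((⌈φ v⌉ : ℝ))| = |((⌈φ u⌉ - ⌈φ v⌉ : ℤ) : ℝ)| := by push_cast; ring_nf
    _ ≤ ((G.dist u v : ℤ) : ℝ) := by exact_mod_cast this
    _ = (G.dist u v : ℝ) := by push_cast; ring

lemma aux_lip_floor {V : Type*} (G : SimpleGraph V) (φ : V → ℝ) (hφ : IsLip G φ) :
    IsLip G (fun w => (⌊φ w⌋ : ℝ)) := by
  intro u v
  have h := abs_le.1 (hφ u v)
  have h' := abs_le.1 (hφ v u)
  rw [SimpleGraph.dist_comm] at h'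
  have h1 : ⌊φ u⌋ ≤ ⌊φ v⌋ + (G.dist u v : ℤ) := by
    rw [← Int.floor_add_intCast]
    exact Int.floor_le_floor (by push_cast; linarith [h.2])
  have h2 : ⌊φ v⌋ ≤ ⌊φ u⌋ + (G.dist u v : ℤ) := by
    rw [← Int.floor_add_intCast]
    exact Int.floor_le_floor (by push_cast; linarith [h'.2])
  have : |(⌊φ u⌋ - ⌊φ v⌋ : ℤ)| ≤ (G.dist u v : ℤ) := abs_le.2 ⟨by omega, by omega⟩
  calc |((⌊φ u⌋ : ℝ)) - ((⌊φ v⌋ : ℝ))| = |((⌊φ u⌋ - ⌊φ v⌋ : ℤ) : ℝ)| := by push_cast; ring_nf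
    _ ≤ ((G.dist u v : ℤ) : ℝ) := by exact_mod_cast this
    _ = (G.dist u v : ℝ) := by push_cast; ring

lemma aux_half (n : ℤ) : ((⌈(n:ℝ)/2⌉ : ℝ) + (⌊(n:ℝ)/2⌋ : ℝ)) / 2 = (n:ℝ)/2 := by
  rcases Int.even_or_odd n with ⟨k, hk⟩ | ⟨k, hk⟩
  · subst hk
    have : ((k + k : ℤ):ℝ)/2 = (k:ℝ) := by push_cast; ring
    rw [this]
    simp
  · subst hk
    have : ((2*k + 1 : ℤ):ℝ)/2 = (k:ℝ) + 1/2 := by push_cast; ring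
    rw [this]
    have hc : ⌈(k:ℝ) + 1/2⌉ = k + 1 := by
      rw [add_comm, Int.ceil_add_intCast]
      have : ⌈(1/2:ℝ)⌉ = 1 := by
        rw [Int.ceil_eq_iff]
        norm_num
      omega
    have hf : ⌊(k:ℝ) + 1/2⌋ = k := by
      rw [add_comm, Int.floor_add_intCast]
      have : ⌊(1/2:ℝ)⌋ = 0 := by
        rw [Int.floor_eq_iff]
        norm_num
      omega
    rw [hc, hf]
    push_cast; ring

theorem stmt13 {V : Type*} (G : SimpleGraph V) [G.LocallyFinite] (hG : G.Connected)
    (x y : V) (hxy : G.Adj x y) :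
    sSup (Fpot G x y ''
        {φ : V → ℝ | IsLip G φ ∧ (∀ w, ∃ n : ℤ, φ w = (n : ℝ)) ∧ φ x = 0 ∧ φ y = 0}) =
      sSup (Fpot G x y ''
        {φ : V → ℝ | IsLip G φ ∧ (∀ w, ∃ n : ℤ, φ w = (n : ℝ) / 2) ∧ φ x = 0 ∧ φ y = 0}) := by
  set A := {φ : V → ℝ | IsLip G φ ∧ (∀ w, ∃ n : ℤ, φ w = (n : ℝ)) ∧ φ x = 0 ∧ φ y = 0} with hA
  set B := {φ : V → ℝ | IsLip G φ ∧ (∀ w, ∃ n : ℤ, φ w = (n : ℝ) / 2) ∧ φ x = 0 ∧ φ y = 0}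
    with hB
  have hAB : A ⊆ B := by
    rintro φ ⟨h1, h2, h3, h4⟩
    refine ⟨h1, fun w => ?_, h3, h4⟩
    obtain ⟨n, hn⟩ := h2 w
    exact ⟨2 * n, by rw [hn]; push_cast; ring⟩
  have hbddB : BddAbove (Fpot G x y '' B) := by
    refine ⟨(G.degree y : ℝ) * G.degree x + (G.degree x : ℝ) * G.degree y, ?_⟩
    rintro r ⟨φ, ⟨h1, _, h3, h4⟩, rfl⟩
    exact aux_bound G x y φ h1 h3 h4
  have hbddA : BddAbove (Fpot G x y '' A) := hbddB.mono (Set.image_mono hAB)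
  have hzero : (fun _ : V => (0:ℝ)) ∈ A := by
    refine ⟨fun u v => by simp, fun w => ⟨0, by simp⟩, rfl, rfl⟩
  have hneA : (Fpot G x y '' A).Nonempty := ⟨_, Set.mem_image_of_mem _ hzero⟩
  have hneB : (Fpot G x y '' B).Nonempty := ⟨_, Set.mem_image_of_mem _ (hAB hzero)⟩
  refine le_antisymm (csSup_le_csSup hbddB hneA (Set.image_mono hAB)) (csSup_le hneB ?_)
  rintro r ⟨φ, ⟨hlip, hhalf, hx0, hy0⟩, rfl⟩
  set f : V → ℝ := fun w => (⌈φ w⌉ : ℝ) with hf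
  set g : V → ℝ := fun w => (⌊φ w⌋ : ℝ) with hg
  have hfeq : ∀ w, φ w = (f w + g w) / 2 := by
    intro w
    obtain ⟨n, hn⟩ := hhalf w
    simp only [hf, hg, hn]
    exact (aux_half n).symm
  have hfA : Fpot G x y f ∈ Fpot G x y '' A := by
    refine Set.mem_image_of_mem _ ⟨aux_lip_ceil G φ hlip, fun w => ⟨⌈φ w⌉, rfl⟩, ?_, ?_⟩
    · simp [hf, hx0]
    · simp [hf, hy0]
  have hgA : Fpot G x y g ∈ Fpot G x y '' A := by
    refine Set.mem_image_of_mem _ ⟨aux_lip_floor G φ hlip, fun w => ⟨⌊φ w⌋, rfl⟩, ?_, ?_⟩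
    · simp [hg, hx0]
    · simp [hg, hy0]
  have h1 := le_csSup hbddA hfA
  have h2 := le_csSup hbddA hgA
  have hsum : ∀ s : Finset V,
      ∑ z ∈ s, φ z = ((∑ z ∈ s, f z) + ∑ z ∈ s, g z) / 2 := by
    intro s
    simp only [hfeq]
    rw [← Finset.sum_div, Finset.sum_add_distrib]
  have heq : Fpot G x y φ = (Fpot G x y f + Fpot G x y g) / 2 := by
    simp only [Fpot]
    rw [hsum, hsum]
    ring
  rw [heq]
  linarith
end

section
/- Let x∼y be an edge of G. Then c_1 ≥ c_0 ≥ c_{−1}. -/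
open scoped Classical

section IdleAux

variable {V : Type*} (G : SimpleGraph V) [G.LocallyFinite]

private lemma dist_cast_lip (hG : G.Connected) (x u v : V) :
    |(G.dist x u : ℝ) - (G.dist x v : ℝ)| ≤ (G.dist u v : ℝ) := by
  have h1 : G.dist x u ≤ G.dist x v + G.dist v u := hG.dist_triangle
  have h2 : G.dist x v ≤ G.dist x u + G.dist u v := hG.dist_triangle
  have h3 : G.dist v u = G.dist u v := SimpleGraph.dist_comm
  rw [abs_sub_le_iff]
  constructor
  · have : G.dist x u ≤ G.dist x v + G.dist u v := by omega
    have := (Nat.cast_le (α := ℝ)).mpr this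
    push_cast at this; linarith
  · have := (Nat.cast_le (α := ℝ)).mpr h2
    push_cast at this; linarith

private lemma cIdle_set_nonempty (hG : G.Connected) (x y : V) (hxy : G.Adj x y)
    (j : ℤ) (hj : |j| ≤ 1) :
    ∃ φ : V → ℝ, IsLip G φ ∧ (∀ w, ∃ n : ℤ, φ w = (n : ℝ)) ∧ φ x = (j : ℝ) ∧ φ y = 0 := by
  have hj' : |(j : ℝ)| ≤ 1 := by exact_mod_cast hj
  refine ⟨fun z => (j : ℝ) * (1 - G.dist x z), ?_, ?_, ?_, ?_⟩
  · intro u v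
    have e : (j:ℝ) * (1 - G.dist x u) - (j:ℝ) * (1 - G.dist x v)
        = (j:ℝ) * ((G.dist x v : ℝ) - G.dist x u) := by ring
    rw [e, abs_mul]
    calc |(j:ℝ)| * |(G.dist x v : ℝ) - (G.dist x u : ℝ)| ≤ 1 * (G.dist u v : ℝ) := by
          refine mul_le_mul hj' ?_ (abs_nonneg _) zero_le_one
          rw [abs_sub_comm]; exact dist_cast_lip G hG x u v
      _ = _ := one_mul _
  · intro w
    exact ⟨j * (1 - G.dist x w), by push_cast; ring⟩
  · simp [SimpleGraph.dist_self]
  · show (j:ℝ) * (1 - (G.dist x y : ℝ)) = 0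
    rw [SimpleGraph.dist_eq_one_iff_adj.mpr hxy]; simp

private lemma cIdle_bddAbove (x y : V) (j : ℤ) (hj : |j| ≤ 1) :
    ∀ r ∈ Fpot G x y ''
      {φ | IsLip G φ ∧ (∀ w, ∃ n : ℤ, φ w = (n : ℝ)) ∧ φ x = (j : ℝ) ∧ φ y = 0},
      r ≤ 3 * (G.degree x : ℝ) * (G.degree y : ℝ) := by
  rintro r ⟨φ, ⟨hlip, hint, hx, hy⟩, rfl⟩
  have hj' : |(j : ℝ)| ≤ 1 := by exact_mod_cast hj
  set Sx := (G.neighborFinset x).erase y with hSx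
  set Sy := (G.neighborFinset y).erase x with hSy
  have hub : ∀ z ∈ Sx, φ z ≤ 2 := by
    intro z hz
    have hadj : G.Adj x z := (G.mem_neighborFinset _ _).mp (Finset.mem_of_mem_erase hz)
    have hd : G.dist x z = 1 := SimpleGraph.dist_eq_one_iff_adj.mpr hadj
    have h := (abs_le.mp (hlip x z)).1
    rw [hd] at h
    have := (abs_le.mp hj').2
    push_cast at h
    linarith [hx ▸ h]
  have hlb : ∀ z ∈ Sy, (-1 : ℝ) ≤ φ z := by
    intro z hz
    have hadj : G.Adj y z := (G.mem_neighborFinset _ _).mp (Finset.mem_of_mem_erase hz)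
    have hd : G.dist y z = 1 := SimpleGraph.dist_eq_one_iff_adj.mpr hadj
    have h := (abs_le.mp (hlip y z)).2
    rw [hd, hy] at h
    push_cast at h
    linarith
  have hcx : (Sx.card : ℝ) ≤ (G.degree x : ℝ) := by
    have : Sx.card ≤ (G.neighborFinset x).card := Finset.card_le_card (Finset.erase_subset _ _)
    rw [SimpleGraph.card_neighborFinset_eq_degree] at this
    exact_mod_cast this
  have hcy : (Sy.card : ℝ) ≤ (G.degree y : ℝ) := by
    have : Sy.card ≤ (G.neighborFinset y).card := Finset.card_le_card (Finset.erase_subset _ _)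
    rw [SimpleGraph.card_neighborFinset_eq_degree] at this
    exact_mod_cast this
  have hA : ∑ z ∈ Sx, φ z ≤ 2 * (G.degree x : ℝ) := by
    calc ∑ z ∈ Sx, φ z ≤ ∑ _z ∈ Sx, (2:ℝ) := Finset.sum_le_sum hub
      _ = 2 * (Sx.card : ℝ) := by rw [Finset.sum_const, nsmul_eq_mul]; ring
      _ ≤ 2 * (G.degree x : ℝ) := by linarith
  have hB : -(G.degree y : ℝ) ≤ ∑ z ∈ Sy, φ z := by
    calc -(G.degree y : ℝ) ≤ -(Sy.card : ℝ) := by linarith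
      _ = ∑ _z ∈ Sy, (-1:ℝ) := by rw [Finset.sum_const, nsmul_eq_mul]; ring
      _ ≤ ∑ z ∈ Sy, φ z := Finset.sum_le_sum hlb
  have hdx0 : (0:ℝ) ≤ (G.degree x : ℝ) := Nat.cast_nonneg _
  have hdy0 : (0:ℝ) ≤ (G.degree y : ℝ) := Nat.cast_nonneg _
  unfold Fpot
  rw [← hSx, ← hSy]
  nlinarith [mul_le_mul_of_nonneg_left hA hdy0, mul_le_mul_of_nonneg_left hB hdx0]

private lemma step_max (hG : G.Connected) (x y : V) (hxy : G.Adj x y) (j : ℤ)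
    (hcase : j = -1 ∨ (j = 0 ∧ G.degree x ≤ G.degree y))
    (φ : V → ℝ) (hlip : IsLip G φ) (hint : ∀ w, ∃ n : ℤ, φ w = (n : ℝ))
    (hx : φ x = (j : ℝ)) (hy : φ y = 0) :
    ∃ φ' : V → ℝ, IsLip G φ' ∧ (∀ w, ∃ n : ℤ, φ' w = (n : ℝ)) ∧
      φ' x = ((j + 1 : ℤ) : ℝ) ∧ φ' y = 0 ∧ Fpot G x y φ ≤ Fpot G x y φ' := by
  have hj0 : j ≤ 0 := by rcases hcase with h | ⟨h, _⟩ <;> omega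
  have hj1 : -1 ≤ j := by rcases hcase with h | ⟨h, _⟩ <;> omega
  set ψ : V → ℝ := fun z => ((j : ℝ) + 1) - G.dist x z with hψ
  set φ' : V → ℝ := fun z => max (φ z) (ψ z) with hφ'
  have hlow : ∀ z, (j : ℝ) - G.dist x z ≤ φ z := by
    intro z
    have h := (abs_le.mp (hlip x z)).2
    rw [hx] at h; linarith
  have hlip' : IsLip G φ' := by
    intro u v
    refine le_trans (abs_max_sub_max_le_max _ _ _ _) (max_le (hlip u v) ?_)
    rw [show ψ u - ψ v = (G.dist x v : ℝ) - (G.dist x u : ℝ) by simp only [hψ]; ring,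
      abs_sub_comm]
    exact dist_cast_lip G hG x u v
  have hint' : ∀ w, ∃ n : ℤ, φ' w = (n : ℝ) := by
    intro w
    obtain ⟨n, hn⟩ := hint w
    refine ⟨max n (j + 1 - G.dist x w), ?_⟩
    show max (φ w) (ψ w) = _
    rw [hn, Int.cast_max]
    congr 1
    push_cast; ring
  have hdself : G.dist x x = 0 := SimpleGraph.dist_self
  have hx' : φ' x = ((j + 1 : ℤ) : ℝ) := by
    show max (φ x) (ψ x) = _
    rw [hx, hψ]
    simp only [hdself]
    push_cast
    rw [max_eq_right (by linarith)]
    ring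
  have hdxy : G.dist x y = 1 := SimpleGraph.dist_eq_one_iff_adj.mpr hxy
  have hy' : φ' y = 0 := by
    show max (φ y) (ψ y) = _
    rw [hy, hψ]
    simp only [hdxy]
    push_cast
    rw [max_eq_left (by
      have : ((j : ℝ)) ≤ 0 := by exact_mod_cast hj0
      linarith)]
  set Sx := (G.neighborFinset x).erase y with hSx
  set Sy := (G.neighborFinset y).erase x with hSy
  have hg0 : ∀ z, 0 ≤ φ' z - φ z := by
    intro z; have : φ z ≤ φ' z := le_max_left _ _
    linarith
  have key : ∀ z ∈ Sy, φ' z - φ z ≠ 0 → z ∈ Sx ∧ j = 0 := by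
    intro z hz hne
    have hzy : G.Adj y z := (G.mem_neighborFinset _ _).mp (Finset.mem_of_mem_erase hz)
    have hzx : z ≠ x := Finset.ne_of_mem_erase hz
    have hdyz : G.dist y z = 1 := SimpleGraph.dist_eq_one_iff_adj.mpr hzy
    have hlt : φ z < ψ z := by
      rcases lt_or_ge (φ z) (ψ z) with h | h
      · exact h
      · exact absurd (by show max (φ z) (ψ z) - φ z = 0; rw [max_eq_left h]; ring) hne
    obtain ⟨n, hn⟩ := hint z
    have h1 : (n : ℝ) < (j : ℝ) + 1 - (G.dist x z : ℝ) := by rw [← hn]; exact hlt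
    have h2 : (j : ℝ) - (G.dist x z : ℝ) ≤ (n : ℝ) := by rw [← hn]; exact hlow z
    have h3 : (-1 : ℝ) ≤ (n : ℝ) := by
      have h := (abs_le.mp (hlip y z)).2
      rw [hy, hdyz, hn] at h
      push_cast at h; linarith
    have hz1 : (n : ℤ) < j + 1 - (G.dist x z : ℤ) := by exact_mod_cast h1
    have hz3 : (-1 : ℤ) ≤ n := by exact_mod_cast h3
    have hd0 : G.dist x z ≠ 0 := by
      intro h
      exact hzx (hG.dist_eq_zero_iff.mp h).symm
    have hdist1 : G.dist x z = 1 ∧ j = 0 := by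
      constructor <;> omega
    have hadj : G.Adj x z := SimpleGraph.dist_eq_one_iff_adj.mp hdist1.1
    refine ⟨Finset.mem_erase.mpr ⟨hzy.ne', (G.mem_neighborFinset _ _).mpr hadj⟩, hdist1.2⟩
  have hAnn : 0 ≤ ∑ z ∈ Sx, (φ' z - φ z) := Finset.sum_nonneg fun z _ => hg0 z
  have hBnn : 0 ≤ ∑ z ∈ Sy, (φ' z - φ z) := Finset.sum_nonneg fun z _ => hg0 z
  have hBA : ∑ z ∈ Sy, (φ' z - φ z) ≤ ∑ z ∈ Sx, (φ' z - φ z) := by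
    rw [← Finset.sum_filter_ne_zero Sy (f := fun z => φ' z - φ z)]
    refine Finset.sum_le_sum_of_subset_of_nonneg ?_ fun z _ _ => hg0 z
    intro z hz
    rw [Finset.mem_filter] at hz
    exact (key z hz.1 hz.2).1
  have hB0 : j = -1 → ∑ z ∈ Sy, (φ' z - φ z) = 0 := by
    intro hjm
    refine Finset.sum_eq_zero fun z hz => ?_
    by_contra hne
    have := (key z hz hne).2
    omega
  have expand : Fpot G x y φ' - Fpot G x y φ =
      (G.degree y : ℝ) * (∑ z ∈ Sx, (φ' z - φ z))
        - (G.degree x : ℝ) * (∑ z ∈ Sy, (φ' z - φ z)) := by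
    unfold Fpot
    rw [← hSx, ← hSy, Finset.sum_sub_distrib, Finset.sum_sub_distrib]
    ring
  refine ⟨φ', hlip', hint', hx', hy', ?_⟩
  have hdx0 : (0:ℝ) ≤ (G.degree x : ℝ) := Nat.cast_nonneg _
  have hdy0 : (0:ℝ) ≤ (G.degree y : ℝ) := Nat.cast_nonneg _
  rcases hcase with hjm | ⟨_, hdeg⟩
  · have hB := hB0 hjm
    nlinarith [mul_nonneg hdy0 hAnn]
  · have hdeg' : (G.degree x : ℝ) ≤ (G.degree y : ℝ) := by exact_mod_cast hdeg
    nlinarith [mul_le_mul_of_nonneg_right hdeg' hBnn, mul_le_mul_of_nonneg_left hBA hdy0]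


private lemma step_min (hG : G.Connected) (x y : V) (hxy : G.Adj x y)
    (hdeg : G.degree y ≤ G.degree x)
    (φ : V → ℝ) (hlip : IsLip G φ) (hint : ∀ w, ∃ n : ℤ, φ w = (n : ℝ))
    (hx : φ x = 0) (hy : φ y = 0) :
    ∃ φ' : V → ℝ, IsLip G φ' ∧ (∀ w, ∃ n : ℤ, φ' w = (n : ℝ)) ∧
      φ' x = 1 ∧ φ' y = 0 ∧ Fpot G x y φ ≤ Fpot G x y φ' := by
  set φ' : V → ℝ := fun z => min (φ z + 1) (G.dist y z) with hφ'
  have hup : ∀ z, φ z ≤ (G.dist y z : ℝ) := by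
    intro z
    have h := (abs_le.mp (hlip y z)).1
    rw [hy] at h; linarith
  have hlip' : IsLip G φ' := by
    intro u v
    refine le_trans (abs_min_sub_min_le_max _ _ _ _) (max_le ?_ ?_)
    · have := hlip u v
      rw [show φ u + 1 - (φ v + 1) = φ u - φ v by ring]
      exact this
    · exact dist_cast_lip G hG y u v
  have hint' : ∀ w, ∃ n : ℤ, φ' w = (n : ℝ) := by
    intro w
    obtain ⟨n, hn⟩ := hint w
    refine ⟨min (n + 1) (G.dist y w), ?_⟩
    show min (φ w + 1) ((G.dist y w : ℕ) : ℝ) = _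
    rw [hn, Int.cast_min]
    congr 1 <;> push_cast <;> ring
  have hdyx : G.dist y x = 1 := SimpleGraph.dist_eq_one_iff_adj.mpr hxy.symm
  have hx' : φ' x = 1 := by
    show min (φ x + 1) ((G.dist y x : ℕ) : ℝ) = 1
    rw [hx, hdyx]; norm_num
  have hy' : φ' y = 0 := by
    show min (φ y + 1) ((G.dist y y : ℕ) : ℝ) = 0
    rw [hy, SimpleGraph.dist_self]; norm_num
  set Sx := (G.neighborFinset x).erase y with hSx
  set Sy := (G.neighborFinset y).erase x with hSy
  set g : V → ℝ := fun z => (φ z + 1) - φ' z with hg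
  have hg0 : ∀ z, 0 ≤ g z := by
    intro z; have : φ' z ≤ φ z + 1 := min_le_left _ _
    show 0 ≤ (φ z + 1) - φ' z; linarith
  have key : ∀ z ∈ Sx, g z ≠ 0 → z ∈ Sy := by
    intro z hz hne
    have hzx : G.Adj x z := (G.mem_neighborFinset _ _).mp (Finset.mem_of_mem_erase hz)
    have hzy : z ≠ y := Finset.ne_of_mem_erase hz
    have hlt : (G.dist y z : ℝ) < φ z + 1 := by
      by_contra h
      push_neg at h
      apply hne
      show (φ z + 1) - min (φ z + 1) ((G.dist y z : ℕ) : ℝ) = 0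
      rw [min_eq_left h]; ring
    obtain ⟨n, hn⟩ := hint z
    have hzadj : G.dist x z = 1 := SimpleGraph.dist_eq_one_iff_adj.mpr hzx
    have h1 : (G.dist y z : ℝ) < (n : ℝ) + 1 := by rw [← hn]; exact hlt
    have h2 : (n : ℝ) ≤ (G.dist y z : ℝ) := by rw [← hn]; exact hup z
    have h3 : (n : ℝ) ≤ 1 := by
      have h := (abs_le.mp (hlip x z)).1
      rw [hx, hzadj, hn] at h
      push_cast at h; linarith
    have hz1 : (G.dist y z : ℤ) < n + 1 := by exact_mod_cast h1
    have hz2 : (n : ℤ) ≤ (G.dist y z : ℤ) := by exact_mod_cast h2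
    have hz3 : (n : ℤ) ≤ 1 := by exact_mod_cast h3
    have hd0 : G.dist y z ≠ 0 := by
      intro h
      exact hzy (hG.dist_eq_zero_iff.mp h).symm
    have hdist1 : G.dist y z = 1 := by omega
    have hadj : G.Adj y z := SimpleGraph.dist_eq_one_iff_adj.mp hdist1
    exact Finset.mem_erase.mpr ⟨hzx.ne', (G.mem_neighborFinset _ _).mpr hadj⟩
  have hAnn : 0 ≤ ∑ z ∈ Sx, g z := Finset.sum_nonneg fun z _ => hg0 z
  have hBnn : 0 ≤ ∑ z ∈ Sy, g z := Finset.sum_nonneg fun z _ => hg0 z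
  have hAB : ∑ z ∈ Sx, g z ≤ ∑ z ∈ Sy, g z := by
    rw [← Finset.sum_filter_ne_zero Sx (f := g)]
    refine Finset.sum_le_sum_of_subset_of_nonneg ?_ fun z _ _ => hg0 z
    intro z hz
    rw [Finset.mem_filter] at hz
    exact key z hz.1 hz.2
  have hcard : ∀ (v w : V), G.Adj v w →
      (((G.neighborFinset v).erase w).card : ℝ) = (G.degree v : ℝ) - 1 := by
    intro v w hvw
    have hmem : w ∈ G.neighborFinset v := (G.mem_neighborFinset _ _).mpr hvw
    rw [Finset.card_erase_of_mem hmem, SimpleGraph.card_neighborFinset_eq_degree]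
    have : 1 ≤ G.degree v := by
      rw [← SimpleGraph.card_neighborFinset_eq_degree]
      exact Finset.card_pos.mpr ⟨w, hmem⟩
    push_cast [Nat.cast_sub this]
    ring
  have hcx : ((Sx.card : ℕ) : ℝ) = (G.degree x : ℝ) - 1 := hcard x y hxy
  have hcy : ((Sy.card : ℕ) : ℝ) = (G.degree y : ℝ) - 1 := hcard y x hxy.symm
  have hsumx : ∑ z ∈ Sx, φ' z = ∑ z ∈ Sx, φ z + ((G.degree x : ℝ) - 1) - ∑ z ∈ Sx, g z := by
    have : ∀ z, φ' z = φ z + 1 - g z := by intro z; show φ' z = φ z + 1 - ((φ z + 1) - φ' z); ring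
    rw [Finset.sum_congr rfl fun z _ => this z]
    rw [Finset.sum_sub_distrib, Finset.sum_add_distrib, Finset.sum_const, nsmul_eq_mul,
      mul_one, hcx]
  have hsumy : ∑ z ∈ Sy, φ' z = ∑ z ∈ Sy, φ z + ((G.degree y : ℝ) - 1) - ∑ z ∈ Sy, g z := by
    have : ∀ z, φ' z = φ z + 1 - g z := by intro z; show φ' z = φ z + 1 - ((φ z + 1) - φ' z); ring
    rw [Finset.sum_congr rfl fun z _ => this z]
    rw [Finset.sum_sub_distrib, Finset.sum_add_distrib, Finset.sum_const, nsmul_eq_mul,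
      mul_one, hcy]
  refine ⟨φ', hlip', hint', hx', hy', ?_⟩
  have hdx0 : (0:ℝ) ≤ (G.degree x : ℝ) := Nat.cast_nonneg _
  have hdy0 : (0:ℝ) ≤ (G.degree y : ℝ) := Nat.cast_nonneg _
  have hdeg' : (G.degree y : ℝ) ≤ (G.degree x : ℝ) := by exact_mod_cast hdeg
  unfold Fpot
  rw [← hSx, ← hSy, hsumx, hsumy]
  nlinarith [mul_le_mul_of_nonneg_left hAB hdy0, mul_le_mul_of_nonneg_right hdeg' hBnn]


private lemma cIdle_le_aux (hG : G.Connected) (x y : V) (hxy : G.Adj x y) (j k : ℤ)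
    (hj : |j| ≤ 1) (hk : |k| ≤ 1)
    (hstep : ∀ φ : V → ℝ, IsLip G φ → (∀ w, ∃ n : ℤ, φ w = (n : ℝ)) → φ x = (j : ℝ) →
      φ y = 0 → ∃ φ' : V → ℝ, IsLip G φ' ∧ (∀ w, ∃ n : ℤ, φ' w = (n : ℝ)) ∧
        φ' x = (k : ℝ) ∧ φ' y = 0 ∧ Fpot G x y φ ≤ Fpot G x y φ') :
    cIdle G x y j ≤ cIdle G x y k := by
  unfold cIdle
  obtain ⟨φ0, h0⟩ := cIdle_set_nonempty G hG x y hxy j hj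
  refine csSup_le ⟨Fpot G x y φ0, Set.mem_image_of_mem _ h0⟩ ?_
  rintro r ⟨φ, ⟨h1, h2, h3, h4⟩, rfl⟩
  obtain ⟨φ', hl, hi, hx', hy', hle⟩ := hstep φ h1 h2 h3 h4
  refine le_trans hle (le_csSup ⟨3 * (G.degree x : ℝ) * (G.degree y : ℝ), ?_⟩ ?_)
  · intro s hs; exact cIdle_bddAbove G x y k hk s hs
  · exact Set.mem_image_of_mem _ ⟨hl, hi, hx', hy'⟩

end IdleAux

theorem stmt14 {V : Type*} (G : SimpleGraph V) [G.LocallyFinite] (hG : G.Connected)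
    (x y : V) (hxy : G.Adj x y) :
    cIdle G x y (-1) ≤ cIdle G x y 0 ∧ cIdle G x y 0 ≤ cIdle G x y 1 := by
  constructor
  · refine cIdle_le_aux G hG x y hxy (-1) 0 (by norm_num) (by norm_num) ?_
    intro φ h1 h2 h3 h4
    obtain ⟨φ', ha, hb, hc, hd, he⟩ := step_max G hG x y hxy (-1) (Or.inl rfl) φ h1 h2 h3 h4
    exact ⟨φ', ha, hb, by rw [hc]; norm_num, hd, he⟩
  · rcases le_total (G.degree x) (G.degree y) with h | h
    · refine cIdle_le_aux G hG x y hxy 0 1 (by norm_num) (by norm_num) ?_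
      intro φ h1 h2 h3 h4
      obtain ⟨φ', ha, hb, hc, hd, he⟩ := step_max G hG x y hxy 0 (Or.inr ⟨rfl, h⟩) φ h1 h2 h3 h4
      exact ⟨φ', ha, hb, by rw [hc]; norm_num, hd, he⟩
    · refine cIdle_le_aux G hG x y hxy 0 1 (by norm_num) (by norm_num) ?_
      intro φ h1 h2 h3 h4
      obtain ⟨φ', ha, hb, hc, hd, he⟩ :=
        step_min G hG x y hxy h φ h1 h2 (by rw [h3]; norm_num) h4
      exact ⟨φ', ha, hb, by rw [hc]; norm_num, hd, he⟩
end
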